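/- arXiv:2010.05255 — 5 statements merged into one kernel-verified Lean document; each statement's English description precedes it below -/
import Mathlib

section
/- Let $X$ be a Banach lattice and let $I$ be an ideal of the norm dual $X^*$. If $\{f_n\}$ is a disjoint sequence in $X$ such that $\langle g, f_n\rangle \to 0$ for every $g \in I$, then $\langle g, |f_n|\rangle \to 0$ for every $g \in I$. -/
open Filter Topology

variable {X : Type*} [NormedAddCommGroup X] [Lattice X] [HasSolidNorm X] [IsOrderedAddMonoid X] [NormedSpace ℝ X] [CompleteSpace X]

/-- The value at `x ≥ 0` of the absolute value `|g|` of a continuous linear functional `g`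
on a Banach lattice, given by the Riesz–Kantorovich formula `|g|(x) = sup { g y : |y| ≤ x }`. -/
noncomputable def absApp (g : X →L[ℝ] ℝ) (x : X) : ℝ :=
  sSup ((fun y => g y) '' {y : X | |y| ≤ x})

/-- `|h| ≤ |g|` in the dual lattice `X*`. -/
def absLE (h g : X →L[ℝ] ℝ) : Prop :=
  ∀ x : X, 0 ≤ x → absApp h x ≤ absApp g x

set_option linter.unusedSectionVars false
set_option maxHeartbeats 1000000

lemma my_inf_add_le (a b c : X) (ha : 0 ≤ a) (hb : 0 ≤ b) (hc : 0 ≤ c) :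
    a ⊓ (b + c) ≤ a ⊓ b + a ⊓ c := by
  set m := (a ⊓ (b + c) - b) ⊔ 0 with hm
  have h1 : a ⊓ (b + c) - b ≤ c := by
    have h : a ⊓ (b + c) ≤ b + c := inf_le_right
    exact sub_le_iff_le_add'.2 h
  have h2 : a ⊓ (b + c) - b ≤ a := (sub_le_self _ hb).trans inf_le_left
  have hmac : m ≤ a ⊓ c := le_inf (sup_le h2 ha) (sup_le h1 hc)
  have h3 : a ⊓ (b + c) ≤ b + m := sub_le_iff_le_add'.1 le_sup_left
  have h4 : a ⊓ (b + c) ≤ b + (a ⊓ c) := h3.trans (by exact add_le_add le_rfl hmac)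
  have h5 : a ⊓ (b + c) ≤ a + (a ⊓ c) :=
    inf_le_left.trans (le_add_of_nonneg_right (le_inf ha hc))
  have h6 : a ⊓ (b + c) ≤ (b + (a ⊓ c)) ⊓ (a + (a ⊓ c)) := le_inf h4 h5
  calc a ⊓ (b + c) ≤ (b + (a ⊓ c)) ⊓ (a + (a ⊓ c)) := h6
    _ = b ⊓ a + a ⊓ c := by rw [← inf_add]
    _ = a ⊓ b + a ⊓ c := by rw [inf_comm b a]

lemma my_inf_sum (a : X) {ι : Type*} (s : Finset ι) (b : ι → X) (ha : 0 ≤ a)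
    (hb : ∀ i ∈ s, 0 ≤ b i) (h : ∀ i ∈ s, a ⊓ b i = 0) : a ⊓ (∑ i ∈ s, b i) = 0 := by
  classical
  induction s using Finset.induction_on with
  | empty => simp [inf_of_le_right ha]  -- a ⊓ 0 = 0
  | insert j t hj ih =>
    rw [Finset.sum_insert hj]
    have hbt : ∀ i ∈ t, 0 ≤ b i := fun i hi => hb i (Finset.mem_insert_of_mem hi)
    have hsum : 0 ≤ ∑ i ∈ t, b i := Finset.sum_nonneg hbt
    have h1 : a ⊓ (b j + ∑ i ∈ t, b i) ≤ a ⊓ b j + a ⊓ (∑ i ∈ t, b i) :=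
      my_inf_add_le a _ _ ha (hb j (Finset.mem_insert_self j t)) hsum
    rw [h j (Finset.mem_insert_self j t), ih hbt (fun i hi => h i (Finset.mem_insert_of_mem hi)),
      add_zero] at h1
    exact le_antisymm h1 (le_inf ha (add_nonneg (hb j (Finset.mem_insert_self j t)) hsum))

lemma my_nsmul_inf (a b : X) (ha : 0 ≤ a) (hb : 0 ≤ b) (h : a ⊓ b = 0) (n m : ℕ) :
    (n • a) ⊓ (m • b) = 0 := by
  have h1 : a ⊓ (m • b) = 0 := by
    have := my_inf_sum a (Finset.range m) (fun _ => b) ha (fun _ _ => hb) (fun _ _ => h)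
    simpa using this
  have h2 : (m • b) ⊓ (n • a) = 0 := by
    have := my_inf_sum (m • b) (Finset.range n) (fun _ => a) (nsmul_nonneg hb m)
      (fun _ _ => ha) (fun _ _ => by rw [inf_comm]; exact h1)
    simpa using this
  rw [inf_comm]; exact h2

lemma my_nonneg_of_nsmul (y : X) (n : ℕ) (hn : n ≠ 0) (h : 0 ≤ n • y) : 0 ≤ y := by
  have hd : y⁺ ⊓ y⁻ = 0 := posPart_inf_negPart_eq_zero y
  have hd2 : (n • y⁺) ⊓ (n • y⁻) = 0 :=
    my_nsmul_inf _ _ (posPart_nonneg y) (negPart_nonneg y) hd n n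
  have hy : n • y = n • y⁺ - n • y⁻ := by
    rw [← smul_sub]; rw [posPart_sub_negPart]
  have h2 : n • y⁻ ≤ n • y⁺ := by
    rw [hy] at h; exact sub_nonneg.mp h
  have h3 : n • y⁻ = 0 := (inf_eq_right.2 h2).symm.trans hd2
  have h4 : y⁻ ≤ n • y⁻ := by
    obtain ⟨k, rfl⟩ := Nat.exists_eq_succ_of_ne_zero hn
    rw [succ_nsmul]
    exact le_add_of_nonneg_left (nsmul_nonneg (negPart_nonneg y) k)
  have h5 : y⁻ = 0 := le_antisymm (h4.trans_eq h3) (negPart_nonneg y)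
  have := posPart_sub_negPart y
  rw [h5, sub_zero] at this
  rw [← this]; exact posPart_nonneg y


lemma my_smul_nonneg (c : ℝ) (hc : 0 ≤ c) (x : X) (hx : 0 ≤ x) : 0 ≤ c • x := by
  have hratp : ∀ q : ℚ, 0 ≤ q → 0 ≤ (q : ℝ) • x := by
    intro q hq
    apply my_nonneg_of_nsmul _ q.den q.den_nz
    have h1 : q.den • ((q : ℝ) • x) = ((q.den : ℝ) * (q : ℝ)) • x := by
      rw [mul_smul, ← Nat.cast_smul_eq_nsmul ℝ]
    have h2 : ((q.den : ℝ) * (q : ℝ)) = ((q.num.toNat : ℕ) : ℝ) := by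
      have hd0 : ((q.den : ℚ)) ≠ 0 := by exact_mod_cast q.den_nz
      have hq0 : ((q.den : ℚ) * q) = (q.num : ℚ) := by
        nth_rewrite 2 [← Rat.num_div_den q]
        field_simp
      have hnum : ((q.num.toNat : ℤ)) = q.num := Int.toNat_of_nonneg (Rat.num_nonneg.2 hq)
      calc (q.den : ℝ) * (q : ℝ) = (((q.den : ℚ) * q : ℚ) : ℝ) := by push_cast; ring
        _ = ((q.num : ℤ) : ℝ) := by rw [hq0]; push_cast; ring
        _ = ((q.num.toNat : ℕ) : ℝ) := by rw [← Int.cast_natCast (R := ℝ), hnum]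
    rw [h1, h2, Nat.cast_smul_eq_nsmul]
    exact nsmul_nonneg hx _
  -- now approximate c by rationals from above
  have hclosed : IsClosed {t : ℝ | 0 ≤ t • x} :=
    isClosed_nonneg.preimage (continuous_id.smul continuous_const)
  have hseq : ∀ k : ℕ, ∃ q : ℚ, c < (q : ℝ) ∧ (q : ℝ) < c + 1 / (k + 1) := by
    intro k
    have hpos : (0:ℝ) < 1 / ((k:ℝ) + 1) := by positivity
    exact exists_rat_btwn (by push_cast; linarith)
  choose q hq1 hq2 using hseq
  have htend : Tendsto (fun k : ℕ => ((q k : ℝ))) atTop (𝓝 c) := by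
    have h0 : Tendsto (fun k : ℕ => c + 1 / ((k : ℝ) + 1)) atTop (𝓝 (c + 0)) :=
      tendsto_const_nhds.add tendsto_one_div_add_atTop_nhds_zero_nat
    rw [add_zero] at h0
    exact tendsto_of_tendsto_of_tendsto_of_le_of_le tendsto_const_nhds h0
      (fun k => (hq1 k).le) (fun k => (hq2 k).le)
  have hmem : ∀ k, (q k : ℝ) ∈ {t : ℝ | 0 ≤ t • x} := by
    intro k
    exact hratp (q k) (by exact_mod_cast (hc.trans_lt (hq1 k)).le)
  exact hclosed.mem_of_tendsto htend (Eventually.of_forall hmem)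

lemma my_smul_le_smul (c : ℝ) (hc : 0 ≤ c) {x y : X} (h : x ≤ y) : c • x ≤ c • y := by
  have := my_smul_nonneg c hc (y - x) (sub_nonneg.2 h)
  rw [smul_sub] at this
  exact sub_nonneg.mp this

lemma my_smul_sup (c : ℝ) (hc : 0 < c) (x y : X) : c • (x ⊔ y) = c • x ⊔ c • y := by
  apply le_antisymm
  · have h1 : x ≤ c⁻¹ • (c • x ⊔ c • y) := by
      have : c • x ≤ c • x ⊔ c • y := le_sup_left
      have h := my_smul_le_smul c⁻¹ (by positivity) this
      rwa [inv_smul_smul₀ hc.ne'] at h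
    have h2 : y ≤ c⁻¹ • (c • x ⊔ c • y) := by
      have : c • y ≤ c • x ⊔ c • y := le_sup_right
      have h := my_smul_le_smul c⁻¹ (by positivity) this
      rwa [inv_smul_smul₀ hc.ne'] at h
    have h3 := my_smul_le_smul c hc.le (sup_le h1 h2)
    rwa [smul_inv_smul₀ hc.ne'] at h3
  · exact sup_le (my_smul_le_smul c hc.le le_sup_left) (my_smul_le_smul c hc.le le_sup_right)

lemma my_smul_posPart (c : ℝ) (hc : 0 ≤ c) (x : X) : (c • x)⁺ = c • x⁺ := by
  rcases hc.eq_or_lt with h | h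
  · simp [← h]
  · rw [posPart_def, posPart_def, my_smul_sup c h, smul_zero]

lemma my_smul_negPart (c : ℝ) (hc : 0 ≤ c) (x : X) : (c • x)⁻ = c • x⁻ := by
  rw [← posPart_neg, ← smul_neg, my_smul_posPart c hc, posPart_neg]

lemma my_smul_abs_of_nonneg (c : ℝ) (hc : 0 ≤ c) (x : X) : |c • x| = c • |x| := by
  rw [← posPart_add_negPart (c • x), my_smul_posPart c hc, my_smul_negPart c hc, ← smul_add,
    posPart_add_negPart]

lemma my_smul_abs (c : ℝ) (x : X) : |c • x| = |c| • |x| := by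
  rcases le_or_gt 0 c with h | h
  · rw [abs_of_nonneg h]; exact my_smul_abs_of_nonneg c h x
  · have h1 : c • x = -(|c| • x) := by
      rw [abs_of_neg h, neg_smul, neg_neg]
    rw [h1, abs_neg, my_smul_abs_of_nonneg _ (abs_nonneg c)]


lemma my_smul_inf_eq_zero (a b : X) (ha : 0 ≤ a) (hb : 0 ≤ b) (h : a ⊓ b = 0)
    (s t : ℝ) (hs : 0 ≤ s) (ht : 0 ≤ t) : (s • a) ⊓ (t • b) = 0 := by
  obtain ⟨n, hn⟩ := exists_nat_ge (max s t)
  have hsa : s • a ≤ n • a := by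
    rw [← Nat.cast_smul_eq_nsmul ℝ]
    have : (0:X) ≤ ((n:ℝ) - s) • a :=
      my_smul_nonneg _ (by linarith [(le_max_left s t).trans hn]) a ha
    rw [sub_smul] at this
    exact sub_nonneg.mp this
  have htb : t • b ≤ n • b := by
    rw [← Nat.cast_smul_eq_nsmul ℝ]
    have : (0:X) ≤ ((n:ℝ) - t) • b :=
      my_smul_nonneg _ (by linarith [(le_max_right s t).trans hn]) b hb
    rw [sub_smul] at this
    exact sub_nonneg.mp this
  have h1 : (s • a) ⊓ (t • b) ≤ (n • a) ⊓ (n • b) := inf_le_inf hsa htb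
  rw [my_nsmul_inf a b ha hb h n n] at h1
  exact le_antisymm h1 (le_inf (my_smul_nonneg s hs a ha) (my_smul_nonneg t ht b hb))

-- (a - b) ⊔ 0 = a when a ⊓ b = 0, a, b ≥ 0
lemma my_sub_sup_zero (a b : X) (h : a ⊓ b = 0) : (a - b) ⊔ 0 = a := by
  have h1 : (a - b) ⊔ 0 = a ⊔ b - b := by
    rw [sup_sub, sub_self]
  have h2 : a ⊔ b = a + b := by
    have := inf_add_sup a b
    rw [h, zero_add] at this
    exact this
  rw [h1, h2]
  abel

lemma my_posPart_add_of_disj (x y : X) (h : |x| ⊓ |y| = 0) : x⁺ + y⁺ ≤ (x + y)⁺ := by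
  have hxp : x⁺ ≤ |x| := by
    rw [← posPart_add_negPart x]; exact le_add_of_nonneg_right (negPart_nonneg x)
  have hxn : x⁻ ≤ |x| := by
    rw [← posPart_add_negPart x]; exact le_add_of_nonneg_left (posPart_nonneg x)
  have hyp : y⁺ ≤ |y| := by
    rw [← posPart_add_negPart y]; exact le_add_of_nonneg_right (negPart_nonneg y)
  have hyn : y⁻ ≤ |y| := by
    rw [← posPart_add_negPart y]; exact le_add_of_nonneg_left (posPart_nonneg y)
  have key : ∀ u v : X, |u| ⊓ |v| = 0 → u⁺ ≤ (u + v)⁺ := by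
    intro u v huv
    have hup : u⁺ ≤ |u| := by
      rw [← posPart_add_negPart u]; exact le_add_of_nonneg_right (negPart_nonneg u)
    have hun : u⁻ ≤ |u| := by
      rw [← posPart_add_negPart u]; exact le_add_of_nonneg_left (posPart_nonneg u)
    have hvn : v⁻ ≤ |v| := by
      rw [← posPart_add_negPart v]; exact le_add_of_nonneg_left (posPart_nonneg v)
    have hd1 : u⁺ ⊓ v⁻ = 0 := by
      have hle : u⁺ ⊓ v⁻ ≤ |u| ⊓ |v| := inf_le_inf hup hvn
      rw [huv] at hle
      exact le_antisymm hle (le_inf (posPart_nonneg u) (negPart_nonneg v))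
    have hd2 : u⁺ ⊓ (u⁻ + v⁻) = 0 := by
      have hle := my_inf_add_le u⁺ u⁻ v⁻ (posPart_nonneg u) (negPart_nonneg u) (negPart_nonneg v)
      rw [posPart_inf_negPart_eq_zero, hd1, add_zero] at hle
      exact le_antisymm hle (le_inf (posPart_nonneg u)
        (add_nonneg (negPart_nonneg u) (negPart_nonneg v)))
    have hge : u⁺ - (u⁻ + v⁻) ≤ u + v := by
      have h1 : u⁺ - u⁻ = u := posPart_sub_negPart u
      have h2 : -v⁻ ≤ v := by
        have hv := posPart_sub_negPart v
        calc -v⁻ = 0 - v⁻ := by abel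
          _ ≤ v⁺ - v⁻ := sub_le_sub_right (posPart_nonneg v) _
          _ = v := hv
      calc u⁺ - (u⁻ + v⁻) = (u⁺ - u⁻) + (-v⁻) := by abel
        _ ≤ u + v := by rw [h1]; exact add_le_add le_rfl h2
    calc u⁺ = (u⁺ - (u⁻ + v⁻)) ⊔ 0 := (my_sub_sup_zero _ _ hd2).symm
      _ ≤ (u + v) ⊔ 0 := sup_le_sup_right (by exact hge) 0
      _ = (u + v)⁺ := (posPart_def _).symm
  have h1 : x⁺ ≤ (x + y)⁺ := key x y h
  have h2 : y⁺ ≤ (x + y)⁺ := by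
    have := key y x (by rw [inf_comm]; exact h)
    rwa [add_comm] at this
  have hd : x⁺ ⊓ y⁺ = 0 := by
    have hle : x⁺ ⊓ y⁺ ≤ |x| ⊓ |y| := inf_le_inf hxp hyp
    rw [h] at hle
    exact le_antisymm hle (le_inf (posPart_nonneg x) (posPart_nonneg y))
  have : x⁺ + y⁺ = x⁺ ⊔ y⁺ := by
    have := inf_add_sup x⁺ y⁺
    rw [hd, zero_add] at this
    exact this.symm
  rw [this]
  exact sup_le h1 h2


lemma my_mem_zero (g : X →L[ℝ] ℝ) (x : X) (hx : 0 ≤ x) :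
    (0:ℝ) ∈ (fun y => g y) '' {y : X | |y| ≤ x} :=
  ⟨0, by simpa using hx, map_zero g⟩

lemma my_bddAbove (g : X →L[ℝ] ℝ) (x : X) (hx : 0 ≤ x) :
    BddAbove ((fun y => g y) '' {y : X | |y| ≤ x}) := by
  refine ⟨‖g‖ * ‖x‖, ?_⟩
  rintro r ⟨y, hy, rfl⟩
  have h1 : ‖y‖ ≤ ‖x‖ := HasSolidNorm.solid (by rwa [abs_of_nonneg hx])
  calc g y ≤ |g y| := le_abs_self _
    _ = ‖g y‖ := (Real.norm_eq_abs _).symm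
    _ ≤ ‖g‖ * ‖y‖ := g.le_opNorm y
    _ ≤ ‖g‖ * ‖x‖ := by
        exact mul_le_mul_of_nonneg_left h1 (norm_nonneg g)

lemma absApp_nonneg (g : X →L[ℝ] ℝ) (x : X) (hx : 0 ≤ x) : 0 ≤ absApp g x :=
  le_csSup (my_bddAbove g x hx) (my_mem_zero g x hx)

lemma absApp_le (g : X →L[ℝ] ℝ) (x : X) (hx : 0 ≤ x) : absApp g x ≤ ‖g‖ * ‖x‖ := by
  apply csSup_le ⟨0, my_mem_zero g x hx⟩
  rintro r ⟨y, hy, rfl⟩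
  have h1 : ‖y‖ ≤ ‖x‖ := HasSolidNorm.solid (by rwa [abs_of_nonneg hx])
  calc g y ≤ |g y| := le_abs_self _
    _ = ‖g y‖ := (Real.norm_eq_abs _).symm
    _ ≤ ‖g‖ * ‖y‖ := g.le_opNorm y
    _ ≤ ‖g‖ * ‖x‖ := mul_le_mul_of_nonneg_left h1 (norm_nonneg g)

lemma absApp_zero (g : X →L[ℝ] ℝ) : absApp g 0 = 0 := by
  have h1 : (fun y => g y) '' {y : X | |y| ≤ 0} = {0} := by
    ext r
    constructor
    · rintro ⟨y, hy, rfl⟩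
      have h0 : |y| = 0 := le_antisymm hy (abs_nonneg y)
      have hy1 : y ≤ 0 := le_trans (le_abs_self y) (le_of_eq h0)
      have hy2 : -y ≤ 0 := le_trans (neg_le_abs y) (le_of_eq h0)
      have hy0 : y = 0 := le_antisymm hy1 (by simpa using hy2)
      simp [hy0]
    · rintro rfl
      exact my_mem_zero g 0 le_rfl
  rw [absApp, h1, csSup_singleton]

lemma absApp_mono (g : X →L[ℝ] ℝ) (x x' : X) (hx' : 0 ≤ x') (h : x ≤ x') :
    absApp g x ≤ absApp g x' := by
  rcases Set.eq_empty_or_nonempty ((fun y => g y) '' {y : X | |y| ≤ x}) with he | hne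
  · rw [absApp, he, Real.sSup_empty]
    exact absApp_nonneg g x' hx'
  · exact csSup_le_csSup (my_bddAbove g x' hx') hne
      (Set.image_mono (fun y hy => le_trans hy h))

lemma absApp_superadd (g : X →L[ℝ] ℝ) (u v : X) (hu : 0 ≤ u) (hv : 0 ≤ v) :
    absApp g u + absApp g v ≤ absApp g (u + v) := by
  have hne_u : ((fun y => g y) '' {y : X | |y| ≤ u}).Nonempty := ⟨0, my_mem_zero g u hu⟩
  have hne_v : ((fun y => g y) '' {y : X | |y| ≤ v}).Nonempty := ⟨0, my_mem_zero g v hv⟩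
  have hb := my_bddAbove g (u + v) (add_nonneg hu hv)
  have key : ∀ r ∈ (fun y => g y) '' {y : X | |y| ≤ u},
      ∀ t ∈ (fun y => g y) '' {y : X | |y| ≤ v}, r + t ≤ absApp g (u + v) := by
    rintro _ ⟨y, hy, rfl⟩ _ ⟨z, hz, rfl⟩
    have hmem : g y + g z ∈ (fun y => g y) '' {y : X | |y| ≤ u + v} :=
      ⟨y + z, le_trans (abs_add_le y z) (add_le_add hy hz), (map_add g y z)⟩
    exact le_csSup hb hmem
  have h2 : ∀ r ∈ (fun y => g y) '' {y : X | |y| ≤ u},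
      absApp g v ≤ absApp g (u + v) - r := fun r hr =>
    csSup_le hne_v (fun t ht => le_sub_iff_add_le.mpr (by have := key r hr t ht; linarith))
  have h3 : absApp g u ≤ absApp g (u + v) - absApp g v :=
    csSup_le hne_u (fun r hr => le_sub_iff_add_le.mpr (by have := h2 r hr; linarith))
  linarith

lemma my_riesz_decomp (u v z : X) (hu : 0 ≤ u) (hv : 0 ≤ v) (hz : |z| ≤ u + v) :
    ∃ z₁ z₂ : X, z = z₁ + z₂ ∧ |z₁| ≤ u ∧ |z₂| ≤ v := by
  refine ⟨(z ⊔ (-u)) ⊓ u, z - (z ⊔ (-u)) ⊓ u, by abel, ?_, ?_⟩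
  · rw [abs_le']
    constructor
    · exact inf_le_right
    · have h1 : -u ≤ z ⊔ (-u) := le_sup_right
      have h2 : -u ≤ u := le_trans (neg_nonpos.2 hu) hu
      have h3 : -u ≤ (z ⊔ (-u)) ⊓ u := le_inf h1 h2
      exact neg_le.mpr h3
  · have hzu : z ≤ u + v := le_trans (le_abs_self z) hz
    have hzl : -(u + v) ≤ z := neg_le.1 (le_trans (neg_le_abs z) hz)
    have heq : z - (z ⊔ (-u)) ⊓ u = (0 ⊓ (z + u)) ⊔ (z - u) := by
      rw [sub_inf, sub_sup, sub_self, sub_neg_eq_add]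
    rw [heq, abs_le']
    constructor
    · apply sup_le
      · exact le_trans inf_le_left hv
      · exact sub_le_iff_le_add.2 (by rwa [add_comm] at hzu)
    · rw [neg_sup, neg_inf, neg_zero]
      refine le_trans inf_le_left (sup_le hv ?_)
      have hz2 : -z ≤ u + v := neg_le.mpr hzl
      calc -(z + u) = -z - u := by abel
        _ ≤ (u + v) - u := sub_le_sub_right hz2 u
        _ = v := by abel


lemma absApp_subadd (g : X →L[ℝ] ℝ) (u v : X) (hu : 0 ≤ u) (hv : 0 ≤ v) :
    absApp g (u + v) ≤ absApp g u + absApp g v := by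
  have hne : ((fun y => g y) '' {y : X | |y| ≤ u + v}).Nonempty :=
    ⟨0, my_mem_zero g (u + v) (add_nonneg hu hv)⟩
  apply csSup_le hne
  rintro _ ⟨z, hz, rfl⟩
  obtain ⟨z₁, z₂, rfl, h1, h2⟩ := my_riesz_decomp u v z hu hv hz
  have m1 : g z₁ ≤ absApp g u := le_csSup (my_bddAbove g u hu) ⟨z₁, h1, rfl⟩
  have m2 : g z₂ ≤ absApp g v := le_csSup (my_bddAbove g v hv) ⟨z₂, h2, rfl⟩
  calc g (z₁ + z₂) = g z₁ + g z₂ := map_add g z₁ z₂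
    _ ≤ _ := add_le_add m1 m2

lemma absApp_smul (g : X →L[ℝ] ℝ) (t : ℝ) (ht : 0 ≤ t) (u : X) (hu : 0 ≤ u) :
    absApp g (t • u) = t * absApp g u := by
  rcases ht.eq_or_lt with h | h
  · rw [← h, zero_smul, zero_mul, absApp_zero]
  have htu : 0 ≤ t • u := my_smul_nonneg t ht u hu
  apply le_antisymm
  · apply csSup_le ⟨0, my_mem_zero g (t • u) htu⟩
    rintro _ ⟨y, hy, rfl⟩
    have h1 : |t⁻¹ • y| ≤ u := by
      rw [my_smul_abs, abs_of_pos (inv_pos.2 h)]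
      have := my_smul_le_smul t⁻¹ (inv_pos.2 h).le hy
      rwa [inv_smul_smul₀ h.ne'] at this
    have h2 : g (t⁻¹ • y) ≤ absApp g u := le_csSup (my_bddAbove g u hu) ⟨_, h1, rfl⟩
    have h3 : g y = t * g (t⁻¹ • y) := by
      rw [map_smul, smul_eq_mul, ← mul_assoc, mul_inv_cancel₀ h.ne', one_mul]
    exact le_trans (le_of_eq h3) (mul_le_mul_of_nonneg_left h2 ht)
  · rw [mul_comm, ← le_div_iff₀ h, div_eq_inv_mul]
    apply csSup_le ⟨0, my_mem_zero g u hu⟩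
    rintro _ ⟨y, hy, rfl⟩
    have h1 : |t • y| ≤ t • u := by
      rw [my_smul_abs, abs_of_pos h]
      exact my_smul_le_smul t ht hy
    have h2 : g (t • y) ≤ absApp g (t • u) := le_csSup (my_bddAbove g _ htu) ⟨_, h1, rfl⟩
    have h3 : g y = t⁻¹ * g (t • y) := by
      rw [map_smul, smul_eq_mul, ← mul_assoc, inv_mul_cancel₀ h.ne', one_mul]
    exact le_trans (le_of_eq h3) (mul_le_mul_of_nonneg_left h2 (inv_pos.2 h).le)

lemma my_abs_le_absApp (g : X →L[ℝ] ℝ) (x : X) (hx : 0 ≤ x) : |g x| ≤ absApp g x := by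
  rw [abs_le]
  constructor
  · have : g (-x) ≤ absApp g x :=
      le_csSup (my_bddAbove g x hx) ⟨-x, by simpa [abs_of_nonneg hx] using le_rfl, rfl⟩
    rw [map_neg] at this
    linarith
  · exact le_csSup (my_bddAbove g x hx) ⟨x, by simp [abs_of_nonneg hx], rfl⟩

lemma my_posPart_le_abs (x : X) : x⁺ ≤ |x| := by
  rw [← posPart_add_negPart x]; exact le_add_of_nonneg_right (negPart_nonneg x)

-- the sublinear functional p
noncomputable def pfun (g : X →L[ℝ] ℝ) (x : X) : ℝ := absApp g x⁺

lemma pfun_nonneg (g : X →L[ℝ] ℝ) (x : X) : 0 ≤ pfun g x :=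
  absApp_nonneg g _ (posPart_nonneg x)

lemma pfun_zero (g : X →L[ℝ] ℝ) : pfun g 0 = 0 := by
  rw [pfun, posPart_zero, absApp_zero]

lemma pfun_add (g : X →L[ℝ] ℝ) (x y : X) : pfun g (x + y) ≤ pfun g x + pfun g y := by
  have h1 : (x + y)⁺ ≤ x⁺ + y⁺ := by
    rw [posPart_def]
    exact sup_le (add_le_add (le_posPart x) (le_posPart y))
      (add_nonneg (posPart_nonneg x) (posPart_nonneg y))
  calc pfun g (x + y) ≤ absApp g (x⁺ + y⁺) :=
        absApp_mono g _ _ (add_nonneg (posPart_nonneg x) (posPart_nonneg y)) h1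
    _ ≤ pfun g x + pfun g y := absApp_subadd g _ _ (posPart_nonneg x) (posPart_nonneg y)

lemma pfun_smul (g : X →L[ℝ] ℝ) (t : ℝ) (ht : 0 < t) (x : X) : pfun g (t • x) = t * pfun g x := by
  rw [pfun, pfun, my_smul_posPart t ht.le, absApp_smul g t ht.le _ (posPart_nonneg x)]

lemma pfun_le_norm (g : X →L[ℝ] ℝ) (x : X) : pfun g x ≤ ‖g‖ * ‖x‖ := by
  have h1 : ‖x⁺‖ ≤ ‖x‖ := HasSolidNorm.solid (by
    rw [abs_of_nonneg (posPart_nonneg x)]; exact my_posPart_le_abs x)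
  calc pfun g x ≤ ‖g‖ * ‖x⁺‖ := absApp_le g _ (posPart_nonneg x)
    _ ≤ ‖g‖ * ‖x‖ := mul_le_mul_of_nonneg_left h1 (norm_nonneg g)


section Key

variable (g : X →L[ℝ] ℝ) (f : ℕ → X) (hdisj : ∀ n m, n ≠ m → |f n| ⊓ |f m| = 0)

-- sum of absApp over nonneg elements
lemma my_sum_absApp_le (s : Finset ℕ) (u : ℕ → X) (hu : ∀ i ∈ s, 0 ≤ u i) :
    ∑ i ∈ s, absApp g (u i) ≤ absApp g (∑ i ∈ s, u i) := by
  classical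
  induction s using Finset.induction_on with
  | empty => simp [absApp_zero]
  | insert j t hj ih =>
    rw [Finset.sum_insert hj, Finset.sum_insert hj]
    have hut : ∀ i ∈ t, 0 ≤ u i := fun i hi => hu i (Finset.mem_insert_of_mem hi)
    calc absApp g (u j) + ∑ i ∈ t, absApp g (u i)
        ≤ absApp g (u j) + absApp g (∑ i ∈ t, u i) := add_le_add le_rfl (ih hut)
      _ ≤ absApp g (u j + ∑ i ∈ t, u i) :=
          absApp_superadd g _ _ (hu j (Finset.mem_insert_self j t)) (Finset.sum_nonneg hut)

-- |sum| ≤ sum of abs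
lemma my_abs_sum_le (s : Finset ℕ) (u : ℕ → X) : |∑ i ∈ s, u i| ≤ ∑ i ∈ s, |u i| := by
  classical
  induction s using Finset.induction_on with
  | empty => simp
  | insert j t hj ih =>
    rw [Finset.sum_insert hj, Finset.sum_insert hj]
    exact le_trans (abs_add_le _ _) (add_le_add le_rfl ih)

include hdisj in
lemma my_term_disj_sum (s : Finset ℕ) (c : ℕ → ℝ) (j : ℕ) (hj : j ∉ s) :
    |c j • f j| ⊓ |∑ n ∈ s, c n • f n| = 0 := by
  have h1 : |∑ n ∈ s, c n • f n| ≤ ∑ n ∈ s, |c n • f n| := my_abs_sum_le s _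
  have h2 : ∀ n ∈ s, |c j • f j| ⊓ |c n • f n| = 0 := by
    intro n hn
    have hne : j ≠ n := fun h => hj (h ▸ hn)
    rw [my_smul_abs, my_smul_abs]
    exact my_smul_inf_eq_zero _ _ (abs_nonneg (f j)) (abs_nonneg (f n)) (hdisj j n hne)
      _ _ (abs_nonneg (c j)) (abs_nonneg (c n))
  have h3 : |c j • f j| ⊓ (∑ n ∈ s, |c n • f n|) = 0 :=
    my_inf_sum _ s _ (abs_nonneg _) (fun n _ => abs_nonneg _) h2
  have h4 : |c j • f j| ⊓ |∑ n ∈ s, c n • f n| ≤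
      |c j • f j| ⊓ (∑ n ∈ s, |c n • f n|) := inf_le_inf_left _ h1
  rw [h3] at h4
  exact le_antisymm h4 (le_inf (abs_nonneg _) (abs_nonneg _))

include hdisj in
lemma my_sum_posPart_le (s : Finset ℕ) (c : ℕ → ℝ) :
    ∑ n ∈ s, (c n)⁺ • (f n)⁺ ≤ (∑ n ∈ s, c n • f n)⁺ := by
  classical
  induction s using Finset.induction_on with
  | empty => simp
  | insert j t hj ih =>
    rw [Finset.sum_insert hj, Finset.sum_insert hj]
    have hterm : (c j)⁺ • (f j)⁺ ≤ (c j • f j)⁺ := by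
      rcases le_or_gt 0 (c j) with hc | hc
      · rw [posPart_of_nonneg hc, my_smul_posPart _ hc]
      · rw [posPart_eq_zero.2 hc.le, zero_smul]
        exact posPart_nonneg _
    calc (c j)⁺ • (f j)⁺ + ∑ n ∈ t, (c n)⁺ • (f n)⁺
        ≤ (c j • f j)⁺ + (∑ n ∈ t, c n • f n)⁺ := add_le_add hterm ih
      _ ≤ (c j • f j + ∑ n ∈ t, c n • f n)⁺ :=
          my_posPart_add_of_disj _ _ (my_term_disj_sum f hdisj t c j hj)

include hdisj in
lemma my_key (s : Finset ℕ) (c : ℕ → ℝ) :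
    ∑ n ∈ s, c n * absApp g ((f n)⁺) ≤ pfun g (∑ n ∈ s, c n • f n) := by
  have step1 : ∑ n ∈ s, c n * absApp g ((f n)⁺) ≤
      ∑ n ∈ s, (c n)⁺ * absApp g ((f n)⁺) := by
    apply Finset.sum_le_sum
    intro n _
    exact mul_le_mul_of_nonneg_right (le_posPart (c n)) (absApp_nonneg g _ (posPart_nonneg _))
  have step2 : ∀ n, (c n)⁺ * absApp g ((f n)⁺) = absApp g ((c n)⁺ • (f n)⁺) := fun n =>
    (absApp_smul g _ (posPart_nonneg (c n)) _ (posPart_nonneg (f n))).symm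
  have step3 : ∑ n ∈ s, absApp g ((c n)⁺ • (f n)⁺) ≤
      absApp g (∑ n ∈ s, (c n)⁺ • (f n)⁺) :=
    my_sum_absApp_le g s _ (fun n _ =>
      my_smul_nonneg _ (posPart_nonneg (c n)) _ (posPart_nonneg (f n)))
  have step4 : absApp g (∑ n ∈ s, (c n)⁺ • (f n)⁺) ≤
      absApp g ((∑ n ∈ s, c n • f n)⁺) :=
    absApp_mono g _ _ (posPart_nonneg _) (my_sum_posPart_le f hdisj s c)
  calc ∑ n ∈ s, c n * absApp g ((f n)⁺)
      ≤ ∑ n ∈ s, (c n)⁺ * absApp g ((f n)⁺) := step1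
    _ = ∑ n ∈ s, absApp g ((c n)⁺ • (f n)⁺) := by simp_rw [step2]
    _ ≤ absApp g (∑ n ∈ s, (c n)⁺ • (f n)⁺) := step3
    _ ≤ absApp g ((∑ n ∈ s, c n • f n)⁺) := step4

end Key


section Pfunc

variable (g : X →L[ℝ] ℝ) (f : ℕ → X)

noncomputable def Lmap : (ℕ →₀ ℝ) →ₗ[ℝ] X := Finsupp.linearCombination ℝ f

noncomputable def Amap : (ℕ →₀ ℝ) →ₗ[ℝ] ℝ :=
  Finsupp.linearCombination ℝ (fun n => absApp g ((f n)⁺))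

lemma my_key_finsupp (hdisj : ∀ n m, n ≠ m → |f n| ⊓ |f m| = 0) (c : ℕ →₀ ℝ) :
    Amap g f c ≤ pfun g (Lmap f c) := by
  have hA : Amap g f c = ∑ n ∈ c.support, c n * absApp g ((f n)⁺) := by
    rw [Amap, Finsupp.linearCombination_apply, Finsupp.sum]
    simp [smul_eq_mul]
  have hL : Lmap f c = ∑ n ∈ c.support, c n • f n := by
    rw [Lmap, Finsupp.linearCombination_apply, Finsupp.sum]
  rw [hA, hL]
  exact my_key g f hdisj c.support c

noncomputable def PS (x : X) : Set ℝ := Set.range (fun c : ℕ →₀ ℝ => pfun g (x - Lmap f c) + Amap g f c)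

noncomputable def Pfun (x : X) : ℝ := sInf (PS g f x)

lemma PS_nonempty (x : X) : (PS g f x).Nonempty :=
  ⟨pfun g x, 0, by simp⟩

variable (hdisj : ∀ n m, n ≠ m → |f n| ⊓ |f m| = 0)

include hdisj in
lemma PS_lower (x : X) : ∀ r ∈ PS g f x, -pfun g (-x) ≤ r := by
  rintro _ ⟨c, rfl⟩
  have h1 : Amap g f (-c) ≤ pfun g (Lmap f (-c)) := my_key_finsupp g f hdisj (-c)
  rw [map_neg, map_neg] at h1
  have h2 : pfun g (-Lmap f c) ≤ pfun g (-x) + pfun g (x - Lmap f c) := by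
    have := pfun_add g (-x) (x - Lmap f c)
    have he : -x + (x - Lmap f c) = -(Lmap f c) := by abel
    rwa [he] at this
  simp only []
  linarith

include hdisj in
lemma PS_bddBelow (x : X) : BddBelow (PS g f x) := ⟨-pfun g (-x), PS_lower g f hdisj x⟩

include hdisj in
lemma Pfun_le_pfun (x : X) : Pfun g f x ≤ pfun g x := by
  apply csInf_le (PS_bddBelow g f hdisj x)
  exact ⟨0, by simp⟩

include hdisj in
lemma Pfun_add (x y : X) : Pfun g f (x + y) ≤ Pfun g f x + Pfun g f y := by
  have key : ∀ r ∈ PS g f x, ∀ t ∈ PS g f y, Pfun g f (x + y) ≤ r + t := by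
    rintro _ ⟨c, rfl⟩ _ ⟨c', rfl⟩
    have hmem : pfun g (x + y - Lmap f (c + c')) + Amap g f (c + c') ∈ PS g f (x + y) :=
      ⟨c + c', rfl⟩
    have h1 : Pfun g f (x + y) ≤ pfun g (x + y - Lmap f (c + c')) + Amap g f (c + c') :=
      csInf_le (PS_bddBelow g f hdisj (x + y)) hmem
    have h2 : pfun g (x + y - Lmap f (c + c')) ≤
        pfun g (x - Lmap f c) + pfun g (y - Lmap f c') := by
      have he : x + y - Lmap f (c + c') = (x - Lmap f c) + (y - Lmap f c') := by
        rw [map_add]; abel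
      rw [he]
      exact pfun_add g _ _
    have h3 : Amap g f (c + c') = Amap g f c + Amap g f c' := map_add _ _ _
    simp only []
    linarith
  have h5 : Pfun g f (x + y) - Pfun g f x ≤ Pfun g f y := by
    apply le_csInf (PS_nonempty g f y)
    intro t ht
    have h6 : Pfun g f (x + y) - t ≤ Pfun g f x := by
      apply le_csInf (PS_nonempty g f x)
      intro r hr
      have := key r hr t ht
      linarith
    linarith
  linarith

include hdisj in
lemma Pfun_smul (t : ℝ) (ht : 0 < t) (x : X) : Pfun g f (t • x) = t * Pfun g f x := by
  apply le_antisymm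
  · have h1 : ∀ r ∈ PS g f x, Pfun g f (t • x) ≤ t * r := by
      rintro _ ⟨c, rfl⟩
      have hmem : pfun g (t • x - Lmap f (t • c)) + Amap g f (t • c) ∈ PS g f (t • x) :=
        ⟨t • c, rfl⟩
      have he : t • x - Lmap f (t • c) = t • (x - Lmap f c) := by
        rw [map_smul, smul_sub]
      have h2 : pfun g (t • x - Lmap f (t • c)) + Amap g f (t • c)
          = t * (pfun g (x - Lmap f c) + Amap g f c) := by
        rw [he, pfun_smul g t ht, map_smul, smul_eq_mul]
        ring
      have h3 := csInf_le (PS_bddBelow g f hdisj (t • x)) hmem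
      rw [h2] at h3
      exact h3
    have h2 : t⁻¹ * Pfun g f (t • x) ≤ Pfun g f x := by
      apply le_csInf (PS_nonempty g f x)
      intro r hr
      have := h1 r hr
      calc t⁻¹ * Pfun g f (t • x) ≤ t⁻¹ * (t * r) :=
        mul_le_mul_of_nonneg_left this (inv_pos.2 ht).le
        _ = r := by field_simp
    calc Pfun g f (t • x) = t * (t⁻¹ * Pfun g f (t • x)) := by field_simp
      _ ≤ t * Pfun g f x := mul_le_mul_of_nonneg_left h2 ht.le
  · have h1 : ∀ r ∈ PS g f (t • x), t * Pfun g f x ≤ r := by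
      rintro _ ⟨c, rfl⟩
      have he : t • x - Lmap f c = t • (x - Lmap f (t⁻¹ • c)) := by
        rw [map_smul, smul_sub, smul_smul, mul_inv_cancel₀ ht.ne', one_smul]
      have h2 : pfun g (t • x - Lmap f c) + Amap g f c
          = t * (pfun g (x - Lmap f (t⁻¹ • c)) + Amap g f (t⁻¹ • c)) := by
        have hA : Amap g f c = t * Amap g f (t⁻¹ • c) := by
          rw [map_smul, smul_eq_mul, ← mul_assoc, mul_inv_cancel₀ ht.ne', one_mul]
        rw [he, pfun_smul g t ht, hA]
        ring
      have h3 : Pfun g f x ≤ pfun g (x - Lmap f (t⁻¹ • c)) + Amap g f (t⁻¹ • c) :=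
        csInf_le (PS_bddBelow g f hdisj x) ⟨t⁻¹ • c, rfl⟩
      simp only []
      rw [h2]
      exact mul_le_mul_of_nonneg_left h3 ht.le
    exact le_csInf (PS_nonempty g f (t • x)) h1

include hdisj in
lemma Pfun_zero_nonneg : 0 ≤ Pfun g f 0 := by
  apply le_csInf (PS_nonempty g f 0)
  intro r hr
  have := PS_lower g f hdisj 0 r hr
  rw [neg_zero, pfun_zero] at this
  linarith

include hdisj in
lemma Pfun_single (m : ℕ) : Pfun g f (f m) ≤ absApp g ((f m)⁺) := by
  have hmem : pfun g (f m - Lmap f (Finsupp.single m 1)) + Amap g f (Finsupp.single m 1)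
      ∈ PS g f (f m) := ⟨Finsupp.single m 1, rfl⟩
  have h1 : Lmap f (Finsupp.single m 1) = f m := by
    rw [Lmap, Finsupp.linearCombination_single, one_smul]
  have h2 : Amap g f (Finsupp.single m 1) = absApp g ((f m)⁺) := by
    rw [Amap, Finsupp.linearCombination_single, one_smul]
  have h3 := csInf_le (PS_bddBelow g f hdisj (f m)) hmem
  rw [h1, h2, sub_self, pfun_zero, zero_add] at h3
  exact h3

include hdisj in
lemma Pfun_neg_single (m : ℕ) : Pfun g f (-f m) ≤ -absApp g ((f m)⁺) := by
  have hmem : pfun g (-f m - Lmap f (Finsupp.single m (-1))) + Amap g f (Finsupp.single m (-1))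
      ∈ PS g f (-f m) := ⟨Finsupp.single m (-1), rfl⟩
  have h1 : Lmap f (Finsupp.single m (-1)) = -f m := by
    rw [Lmap, Finsupp.linearCombination_single, neg_one_smul]
  have h2 : Amap g f (Finsupp.single m (-1)) = -absApp g ((f m)⁺) := by
    rw [Amap, Finsupp.linearCombination_single]
    simp
  have h3 := csInf_le (PS_bddBelow g f hdisj (-f m)) hmem
  rw [h1, h2, sub_self, pfun_zero, zero_add] at h3
  exact h3

end Pfunc


lemma my_exists_h (g : X →L[ℝ] ℝ) (f : ℕ → X) (hdisj : ∀ n m, n ≠ m → |f n| ⊓ |f m| = 0) :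
    ∃ h : X →L[ℝ] ℝ, absLE h g ∧ ∀ n, h (f n) = absApp g ((f n)⁺) := by
  set f0 : X →ₗ.[ℝ] ℝ := ⟨⊥, 0⟩ with hf0
  have hf : ∀ x : f0.domain, f0 x ≤ Pfun g f x := by
    rintro ⟨x, hx⟩
    have hx0 : x = 0 := (Submodule.mem_bot ℝ).1 hx
    have h00 : f0 ⟨x, hx⟩ = 0 := rfl
    rw [h00]
    have := Pfun_zero_nonneg g f hdisj
    simpa [hx0]
  obtain ⟨h₀, -, hle⟩ := exists_extension_of_le_sublinear f0 (Pfun g f)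
    (fun c hc x => Pfun_smul g f hdisj c hc x) (fun x y => Pfun_add g f hdisj x y) hf
  have hbound : ∀ x : X, ‖h₀ x‖ ≤ ‖g‖ * ‖x‖ := by
    intro x
    rw [Real.norm_eq_abs, abs_le]
    constructor
    · have h1 : h₀ (-x) ≤ Pfun g f (-x) := hle (-x)
      have h2 : Pfun g f (-x) ≤ pfun g (-x) := Pfun_le_pfun g f hdisj (-x)
      have h3 : pfun g (-x) ≤ ‖g‖ * ‖-x‖ := pfun_le_norm g (-x)
      rw [norm_neg] at h3
      rw [map_neg] at h1
      linarith
    · have h1 : h₀ x ≤ Pfun g f x := hle x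
      have h2 : Pfun g f x ≤ pfun g x := Pfun_le_pfun g f hdisj x
      have h3 : pfun g x ≤ ‖g‖ * ‖x‖ := pfun_le_norm g x
      linarith
  refine ⟨h₀.mkContinuous ‖g‖ hbound, ?_, ?_⟩
  · intro x hx
    have hne : ((fun y => (h₀.mkContinuous ‖g‖ hbound) y) '' {y : X | |y| ≤ x}).Nonempty :=
      ⟨0, my_mem_zero _ x hx⟩
    apply csSup_le hne
    rintro _ ⟨y, hy, rfl⟩
    have h1 : h₀ y ≤ Pfun g f y := hle y
    have h2 : Pfun g f y ≤ pfun g y := Pfun_le_pfun g f hdisj y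
    have h3 : pfun g y ≤ absApp g x := by
      apply absApp_mono g _ _ hx
      exact le_trans (my_posPart_le_abs y) hy
    show h₀ y ≤ absApp g x
    linarith
  · intro n
    have h1 : h₀ (f n) ≤ absApp g ((f n)⁺) :=
      le_trans (hle (f n)) (Pfun_single g f hdisj n)
    have h2 : -h₀ (f n) ≤ -absApp g ((f n)⁺) := by
      have := le_trans (hle (-f n)) (Pfun_neg_single g f hdisj n)
      rwa [map_neg] at this
    show h₀ (f n) = absApp g ((f n)⁺)
    linarith

/-- If `I` is an ideal of `X*` and `{f n}` is a disjoint sequence with `g (f n) → 0` for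
every `g ∈ I`, then `g |f n| → 0` for every `g ∈ I`. -/
theorem stmt0 (I : Submodule ℝ (X →L[ℝ] ℝ))
    (hIdeal : ∀ g ∈ I, ∀ h : X →L[ℝ] ℝ, absLE h g → h ∈ I)
    (f : ℕ → X) (hdisj : ∀ n m, n ≠ m → |f n| ⊓ |f m| = 0)
    (hnull : ∀ g ∈ I, Tendsto (fun n => g (f n)) atTop (𝓝 0)) :
    ∀ g ∈ I, Tendsto (fun n => g |f n|) atTop (𝓝 0) := by
  intro g hg
  -- positive parts
  obtain ⟨h₁, hle₁, hval₁⟩ := my_exists_h g f hdisj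
  have hmem₁ : h₁ ∈ I := hIdeal g hg h₁ hle₁
  have htend₁ : Tendsto (fun n => absApp g ((f n)⁺)) atTop (𝓝 0) := by
    have := hnull h₁ hmem₁
    simpa [hval₁] using this
  -- negative parts, using the sequence -f
  have hdisj' : ∀ n m, n ≠ m → |(-f ·) n| ⊓ |(-f ·) m| = 0 := by
    intro n m hnm
    simpa [abs_neg] using hdisj n m hnm
  obtain ⟨h₂, hle₂, hval₂⟩ := my_exists_h g (fun n => -f n) hdisj'
  have hmem₂ : h₂ ∈ I := hIdeal g hg h₂ hle₂
  have htend₂ : Tendsto (fun n => absApp g ((f n)⁻)) atTop (𝓝 0) := by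
    have h0 := hnull h₂ hmem₂
    have h0' : Tendsto (fun n => h₂ (-f n)) atTop (𝓝 0) := by
      have := h0.neg
      rw [neg_zero] at this
      simpa [map_neg] using this
    have heq : ∀ n, h₂ (-f n) = absApp g ((f n)⁻) := by
      intro n
      rw [hval₂ n, posPart_neg]
    simpa [heq] using h0'
  -- squeeze
  have hbounds : ∀ n, ‖g (|f n|)‖ ≤ absApp g ((f n)⁺) + absApp g ((f n)⁻) := by
    intro n
    rw [Real.norm_eq_abs]
    have h1 : |g (|f n|)| ≤ absApp g (|f n|) := my_abs_le_absApp g _ (abs_nonneg (f n))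
    have h2 : absApp g (|f n|) ≤ absApp g ((f n)⁺ + (f n)⁻) := by
      rw [posPart_add_negPart]
    have h3 := absApp_subadd g ((f n)⁺) ((f n)⁻) (posPart_nonneg _) (negPart_nonneg _)
    linarith
  have hsum : Tendsto (fun n => absApp g ((f n)⁺) + absApp g ((f n)⁻)) atTop (𝓝 0) := by
    have := htend₁.add htend₂
    rwa [add_zero] at this
  exact squeeze_zero_norm hbounds hsum
end

section
/- Let $X$ be a Banach lattice with the property that every norm bounded sequence in $X$ has a subsequence whose Cesàro sequence order converges in $X$ (the order Banach-Saks property). Then $X$ is sequentially monotonically complete: every norm bounded increasing sequence in $X_+$ has a supremum in $X$. -/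
open Filter Topology

/-- Cesàro sequence of `f`: `m ↦ (1/(m+1)) ∑_{n=0}^{m} f n`. -/
noncomputable def cesaro {X : Type*} [AddCommGroup X] [Module ℝ X] (f : ℕ → X) (m : ℕ) : X :=
  ((m : ℝ) + 1)⁻¹ • ∑ n ∈ Finset.range (m + 1), f n

/-- Order convergence of a sequence: there is a sequence decreasing (in order) to `0`
which eventually dominates `|g m - x|`. -/
def OrderConvergesTo {X : Type*} [Lattice X] [AddCommGroup X] (g : ℕ → X) (x : X) : Prop :=
  ∃ h : ℕ → X, Antitone h ∧ IsGLB (Set.range h) 0 ∧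
    ∀ k : ℕ, ∃ N : ℕ, ∀ m ≥ N, |g m - x| ≤ h k

/-- `2 ^ j`-semiclosedness in a lattice ordered group. -/
lemma aux_pow2_semiclosed {X : Type*} [Lattice X] [AddCommGroup X]
    [CovariantClass X X (· + ·) (· ≤ ·)] (j : ℕ) {a : X} (h : 0 ≤ 2 ^ j • a) : 0 ≤ a := by
  induction j generalizing a with
  | zero => simpa using h
  | succ j ih =>
    refine nsmul_two_semiclosed (ih ?_)
    rwa [← mul_smul, ← pow_succ]

/-- Nonnegative real scalars preserve positivity in a normed lattice group. -/
lemma aux_smul_nonneg {X : Type*} [NormedAddCommGroup X] [Lattice X] [IsOrderedAddMonoid X] [HasSolidNorm X] [NormedSpace ℝ X]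
    {c : ℝ} (hc : 0 ≤ c) {y : X} (hy : 0 ≤ y) : 0 ≤ c • y := by
  -- nonnegative dyadic rationals work
  have hdy : ∀ (k j : ℕ), 0 ≤ ((k : ℝ) / 2 ^ j) • y := by
    intro k j
    refine aux_pow2_semiclosed j ?_
    have e : (2 ^ j : ℕ) • ((k : ℝ) / 2 ^ j) • y = k • y := by
      rw [← Nat.cast_smul_eq_nsmul ℝ, smul_smul, ← Nat.cast_smul_eq_nsmul ℝ (n := k)]
      congr 1
      push_cast
      field_simp
    rw [e]
    exact nsmul_nonneg hy k
  -- the set of good scalars is closed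
  have hcont : Continuous fun t : ℝ => t • y := continuous_id.smul continuous_const
  have hcl : IsClosed {t : ℝ | 0 ≤ t • y} := IsClosed.preimage hcont isClosed_Ici
  -- approximate c by dyadics from below
  set d : ℕ → ℝ := fun j => (⌊c * 2 ^ j⌋₊ : ℝ) / 2 ^ j with hd
  have h2p : ∀ j : ℕ, (0:ℝ) < 2 ^ j := fun j => by positivity
  have hdle : ∀ j, d j ≤ c := by
    intro j
    rw [hd, div_le_iff₀ (h2p j)]
    exact Nat.floor_le (by positivity)
  have hdge : ∀ j, c - (1 / 2) ^ j ≤ d j := by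
    intro j
    rw [hd, le_div_iff₀ (h2p j)]
    have h0 := Nat.sub_one_lt_floor (c * 2 ^ j)
    have h1 : (1/2 : ℝ) ^ j * 2 ^ j = 1 := by
      rw [div_pow, one_pow, div_mul_cancel₀]
      exact (h2p j).ne'
    nlinarith [h0]
  have htend : Filter.Tendsto d atTop (𝓝 c) := by
    have hlow : Filter.Tendsto (fun j : ℕ => c - (1 / 2 : ℝ) ^ j) atTop (𝓝 (c - 0)) :=
      tendsto_const_nhds.sub (tendsto_pow_atTop_nhds_zero_of_lt_one (by norm_num) (by norm_num))
    rw [sub_zero] at hlow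
    exact tendsto_of_tendsto_of_tendsto_of_le_of_le hlow tendsto_const_nhds hdge hdle
  exact hcl.mem_of_tendsto htend (Filter.Eventually.of_forall fun j => hdy _ j)

lemma aux_smul_le_smul {X : Type*} [NormedAddCommGroup X] [Lattice X] [IsOrderedAddMonoid X] [HasSolidNorm X] [NormedSpace ℝ X]
    {c : ℝ} (hc : 0 ≤ c) {a b : X} (hab : a ≤ b) : c • a ≤ c • b := by
  have h := aux_smul_nonneg hc (sub_nonneg.2 hab)
  rwa [smul_sub, sub_nonneg] at h

/-- If every norm bounded sequence in the Banach lattice `X` has a subsequence whose Cesàro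
sequence order converges (the order Banach–Saks property), then `X` is sequentially
monotonically complete: every norm bounded increasing sequence in `X₊` has a supremum. -/
theorem stmt3 {X : Type*} [NormedAddCommGroup X] [Lattice X] [IsOrderedAddMonoid X] [HasSolidNorm X] [NormedSpace ℝ X] [CompleteSpace X]
    (hoBSP : ∀ f : ℕ → X, (∃ C : ℝ, ∀ n, ‖f n‖ ≤ C) →
      ∃ σ : ℕ → ℕ, StrictMono σ ∧ ∃ x : X, OrderConvergesTo (cesaro (f ∘ σ)) x)
    (f : ℕ → X) (hmono : Monotone f) (hpos : ∀ n, 0 ≤ f n)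
    (hbdd : ∃ C : ℝ, ∀ n, ‖f n‖ ≤ C) :
    ∃ x : X, IsLUB (Set.range f) x := by
  obtain ⟨σ, hσ, x, h, hanti, hglb, hconv⟩ := hoBSP f hbdd
  set g : ℕ → X := f ∘ σ with hg
  have hgmono : Monotone g := hmono.comp hσ.monotone
  have hinvpos : ∀ m : ℕ, (0:ℝ) ≤ ((m : ℝ) + 1)⁻¹ := fun m => by positivity
  -- `cesaro g m - g n` as a scalar multiple of a sum
  have hces : ∀ m n : ℕ, cesaro g m - g n
      = ((m : ℝ) + 1)⁻¹ • ∑ i ∈ Finset.range (m + 1), (g i - g n) := by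
    intro m n
    rw [cesaro, Finset.sum_sub_distrib, smul_sub]
    congr 1
    rw [Finset.sum_const, Finset.card_range, ← Nat.cast_smul_eq_nsmul ℝ, smul_smul,
      show ((m + 1 : ℕ) : ℝ) = (m : ℝ) + 1 by push_cast; ring,
      inv_mul_cancel₀ (by positivity), one_smul]
  -- x is an upper bound of range g
  have key1 : ∀ n, g n ≤ x := by
    intro n
    have hlb : ∀ k, g n - x ≤ h k := by
      intro k
      obtain ⟨N, hN⟩ := hconv k
      set s : X := ∑ i ∈ Finset.range n, (g n - g i) with hs
      have hs0 : (0:X) ≤ s :=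
        Finset.sum_nonneg fun i hi => sub_nonneg.2 (hgmono (Finset.mem_range.1 hi).le)
      have hm : ∀ m, N ≤ m → n ≤ m → g n - x - h k ≤ ((m : ℝ) + 1)⁻¹ • s := by
        intro m hNm hnm
        set t : X := ((m : ℝ) + 1)⁻¹ • s with ht
        have h1 : cesaro g m - x ≤ h k := le_trans (le_abs_self _) (hN m hNm)
        have h1' : cesaro g m ≤ x + h k := sub_le_iff_le_add'.1 h1
        have hsum : -s ≤ ∑ i ∈ Finset.range (m + 1), (g i - g n) := by
          have hsplit : ∑ i ∈ Finset.range (m + 1), (g i - g n)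
              = ∑ i ∈ Finset.range n, (g i - g n)
                + ∑ i ∈ Finset.Ico n (m + 1), (g i - g n) := by
            simp only [Finset.range_eq_Ico]
            exact (Finset.sum_Ico_consecutive _ (Nat.zero_le n) (Nat.le_succ_of_le hnm)).symm
          have e1 : ∑ i ∈ Finset.range n, (g i - g n) = -s := by
            rw [hs, ← Finset.sum_neg_distrib]
            exact Finset.sum_congr rfl fun i _ => (neg_sub _ _).symm
          have e2 : (0:X) ≤ ∑ i ∈ Finset.Ico n (m + 1), (g i - g n) :=
            Finset.sum_nonneg fun i hi => sub_nonneg.2 (hgmono (Finset.mem_Ico.1 hi).1)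
          rw [hsplit, e1]
          exact le_add_of_nonneg_right e2
        have h3 : -t ≤ cesaro g m - g n := by
          rw [ht, ← smul_neg, hces m n]
          exact aux_smul_le_smul (hinvpos m) hsum
        have h3' : g n - t ≤ cesaro g m :=
          calc g n - t = g n + -t := by abel
            _ ≤ g n + (cesaro g m - g n) := add_le_add_right h3 _
            _ = cesaro g m := by abel
        calc g n - x - h k = (g n - t) - x - h k + t := by abel
          _ ≤ cesaro g m - x - h k + t := by
              exact add_le_add_left (sub_le_sub_right (sub_le_sub_right h3' x) (h k)) t
          _ ≤ (x + h k) - x - h k + t := by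
              exact add_le_add_left (sub_le_sub_right (sub_le_sub_right h1' x) (h k)) t
          _ = t := by abel
      -- let m → ∞
      have hcl : IsClosed {z : X | g n - x - h k ≤ z} := isClosed_Ici (a := g n - x - h k)
      have htend : Filter.Tendsto (fun m : ℕ => ((m : ℝ) + 1)⁻¹ • s) atTop (𝓝 (0:X)) := by
        have h0 : Filter.Tendsto (fun m : ℕ => ((m : ℝ) + 1)⁻¹) atTop (𝓝 (0:ℝ)) := by
          simpa [one_div] using tendsto_one_div_add_atTop_nhds_zero_nat (𝕜 := ℝ)
        simpa using h0.smul_const s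
      have hmem : ∀ᶠ m : ℕ in atTop, ((m : ℝ) + 1)⁻¹ • s ∈ {z : X | g n - x - h k ≤ z} := by
        filter_upwards [eventually_ge_atTop N, eventually_ge_atTop n] with m h1 h2
        exact hm m h1 h2
      have hfin : g n - x - h k ≤ 0 := hcl.mem_of_tendsto htend hmem
      calc g n - x = (g n - x - h k) + h k := by abel
        _ ≤ 0 + h k := add_le_add_left hfin _
        _ = h k := zero_add _
    have hlow : g n - x ∈ lowerBounds (Set.range h) := by
      rintro z ⟨k, rfl⟩
      exact hlb k
    exact sub_nonpos.1 (hglb.2 hlow)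
  refine ⟨x, ?_, ?_⟩
  · rintro y ⟨n, rfl⟩
    exact le_trans (hmono hσ.le_apply) (key1 n)
  · intro b hb
    have hcesb : ∀ m, cesaro g m ≤ b := by
      intro m
      have hsum : ∑ i ∈ Finset.range (m + 1), g i ≤ (m + 1) • b := by
        calc ∑ i ∈ Finset.range (m + 1), g i ≤ ∑ _i ∈ Finset.range (m + 1), b :=
              Finset.sum_le_sum fun i _ => hb ⟨σ i, rfl⟩
          _ = (m + 1) • b := by rw [Finset.sum_const, Finset.card_range]
      calc cesaro g m = ((m : ℝ) + 1)⁻¹ • ∑ i ∈ Finset.range (m + 1), g i := rfl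
        _ ≤ ((m : ℝ) + 1)⁻¹ • ((m + 1) • b) := aux_smul_le_smul (hinvpos m) hsum
        _ = b := by
            rw [← Nat.cast_smul_eq_nsmul ℝ, smul_smul,
              show ((m + 1 : ℕ) : ℝ) = (m : ℝ) + 1 by push_cast; ring,
              inv_mul_cancel₀ (by positivity), one_smul]
    have hlb : ∀ k, x - b ≤ h k := by
      intro k
      obtain ⟨N, hN⟩ := hconv k
      have h2 : x - cesaro g N ≤ h k := by
        have := hN N le_rfl
        calc x - cesaro g N ≤ |cesaro g N - x| := by
              rw [abs_sub_comm]; exact le_abs_self _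
          _ ≤ h k := this
      calc x - b = (x - cesaro g N) + (cesaro g N - b) := by abel
        _ ≤ h k + 0 := add_le_add h2 (sub_nonpos.2 (hcesb N))
        _ = h k := add_zero _
    have hlow : x - b ∈ lowerBounds (Set.range h) := by
      rintro z ⟨k, rfl⟩
      exact hlb k
    exact sub_nonpos.1 (hglb.2 hlow)
end

section
/- Let $\{f_n\}$ be a sequence of measurable real-valued functions on a measure space and let $N \in \mathbb{N}$. Then the pointwise inequality $\frac{N}{2} \sup_{n \geq N} \left|\frac{f_1 + \dots + f_n}{n}\right| \leq \sum_{\ell=0}^{N-1} \sup_{m \geq 1} \left|\frac{f_\ell + f_{N+\ell} + \dots + f_{(m-1)N+\ell}}{m}\right|$ holds (where the suprema are taken pointwise in the lattice $L^0$). -/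
open Filter Topology MeasureTheory

/-- For a sequence of measurable functions `{f n}` on a measure space and `N ≥ 1`, the
pointwise inequality
`(N/2) ⋁_{n ≥ N} |(f 0 + ⋯ + f (n-1))/n| ≤ ∑_{ℓ=0}^{N-1} ⋁_{m ≥ 1} |(f ℓ + f (N+ℓ) + ⋯ + f ((m-1)N+ℓ))/m|`
holds, the (possibly infinite) suprema being computed in `ℝ≥0∞`. -/
theorem stmt6 {α : Type*} [MeasurableSpace α] (μ : Measure α)
    (f : ℕ → α → ℝ) (hf : ∀ n, Measurable (f n)) (N : ℕ) (hN : 1 ≤ N) (x : α) :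
    (N : ENNReal) / 2 *
        ⨆ n : {k : ℕ // N ≤ k}, ENNReal.ofReal |(∑ i ∈ Finset.range (n : ℕ), f i x) / (n : ℕ)| ≤
      ∑ ℓ ∈ Finset.range N,
        ⨆ m : ℕ, ENNReal.ofReal
          |(∑ j ∈ Finset.range (m + 1), f (j * N + ℓ) x) / ((m : ℝ) + 1)| := by
  rw [ENNReal.mul_iSup]
  refine iSup_le fun ⟨n, hn⟩ => ?_
  simp only
  have hN0 : 0 < N := hN
  have hn0 : 0 < n := lt_of_lt_of_le hN0 hn
  set m : ℕ → ℕ := fun ℓ => (n - 1 - ℓ) / N + 1 with hm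
  set T : ℕ → ℝ := fun ℓ => ∑ j ∈ Finset.range (m ℓ), f (j * N + ℓ) x with hT
  -- decomposition of the sum
  have hA : ∑ i ∈ Finset.range n, f i x = ∑ ℓ ∈ Finset.range N, T ℓ := by
    rw [hT]
    simp only
    rw [Finset.sum_sigma']
    refine Finset.sum_nbij' (fun i => ⟨i % N, i / N⟩) (fun p => p.2 * N + p.1) ?_ ?_ ?_ ?_ ?_
    · intro i hi
      simp only [Finset.mem_range] at hi
      simp only [Finset.mem_sigma, Finset.mem_range]
      refine ⟨Nat.mod_lt _ hN0, ?_⟩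
      have h1 : i / N ≤ (n - 1 - i % N) / N := by
        rw [Nat.le_div_iff_mul_le hN0]
        have h1 := Nat.div_add_mod i N
        have h2 : i / N * N = N * (i / N) := Nat.mul_comm _ _
        omega
      have hml : m (i % N) = (n - 1 - i % N) / N + 1 := rfl
      omega
    · rintro ⟨ℓ, j⟩ hp
      simp only [Finset.mem_sigma, Finset.mem_range] at hp
      simp only [Finset.mem_range]
      have hml : m ℓ = (n - 1 - ℓ) / N + 1 := rfl
      have h1 : j ≤ (n - 1 - ℓ) / N := by omega
      have h2 : j * N ≤ n - 1 - ℓ := (Nat.le_div_iff_mul_le hN0).mp h1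
      omega
    · intro i hi
      show i / N * N + i % N = i
      have h := Nat.div_add_mod i N
      have h2 : i / N * N = N * (i / N) := Nat.mul_comm _ _
      omega
    · rintro ⟨ℓ, j⟩ hp
      simp only [Finset.mem_sigma, Finset.mem_range] at hp
      have e1 : (j * N + ℓ) % N = ℓ := by
        rw [Nat.mul_comm, Nat.mul_add_mod, Nat.mod_eq_of_lt hp.1]
      have e2 : (j * N + ℓ) / N = j := by
        rw [Nat.mul_comm, Nat.mul_add_div hN0, Nat.div_eq_of_lt hp.1, Nat.add_zero]
      simp only [e1, e2]
    · intro i hi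
      simp only
      have h := Nat.div_add_mod i N
      have h2 : i / N * N = N * (i / N) := Nat.mul_comm _ _
      congr 1
      omega
  -- counting bound
  have hmn : ∀ ℓ ∈ Finset.range N, N * m ℓ ≤ 2 * n := by
    intro ℓ hℓ
    have hℓN : ℓ < N := Finset.mem_range.mp hℓ
    have h2 : N * ((n - 1 - ℓ) / N) ≤ n - 1 - ℓ := Nat.mul_div_le _ _
    have h3 : N * m ℓ = N * ((n - 1 - ℓ) / N) + N := by
      have hml : m ℓ = (n - 1 - ℓ) / N + 1 := rfl
      rw [hml]; ring
    omega
  have habs : |∑ i ∈ Finset.range n, f i x| ≤ ∑ ℓ ∈ Finset.range N, |T ℓ| := by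
    rw [hA]; exact Finset.abs_sum_le_sum_abs _ _
  calc (N : ENNReal) / 2 * ENNReal.ofReal |(∑ i ∈ Finset.range n, f i x) / (n : ℕ)|
      = ENNReal.ofReal ((N / 2 : ℝ) * |(∑ i ∈ Finset.range n, f i x) / (n : ℕ)|) := by
        rw [ENNReal.ofReal_mul (by positivity)]
        congr 1
        rw [ENNReal.ofReal_div_of_pos two_pos]
        norm_num
    _ ≤ ENNReal.ofReal (∑ ℓ ∈ Finset.range N, |T ℓ| * ((N : ℝ) / (2 * n))) := by
        apply ENNReal.ofReal_le_ofReal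
        rw [← Finset.sum_mul, abs_div]
        have hn' : (0:ℝ) < n := by exact_mod_cast hn0
        rw [abs_of_pos hn']
        rw [show (N : ℝ) / 2 * (|∑ i ∈ Finset.range n, f i x| / n) =
            |∑ i ∈ Finset.range n, f i x| * ((N : ℝ) / (2 * n)) by field_simp]
        exact mul_le_mul_of_nonneg_right habs (by positivity)
    _ = ∑ ℓ ∈ Finset.range N, ENNReal.ofReal (|T ℓ| * ((N : ℝ) / (2 * n))) :=
        ENNReal.ofReal_sum_of_nonneg fun ℓ _ => by positivity
    _ ≤ ∑ ℓ ∈ Finset.range N,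
          ⨆ mm : ℕ, ENNReal.ofReal
            |(∑ j ∈ Finset.range (mm + 1), f (j * N + ℓ) x) / ((mm : ℝ) + 1)| := by
        refine Finset.sum_le_sum fun ℓ hℓ => ?_
        refine le_iSup_of_le ((n - 1 - ℓ) / N) ?_
        apply ENNReal.ofReal_le_ofReal
        have hsum : ∑ j ∈ Finset.range ((n - 1 - ℓ) / N + 1), f (j * N + ℓ) x = T ℓ := rfl
        rw [hsum, abs_div]
        have hc : (0:ℝ) < (((n - 1 - ℓ) / N : ℕ) : ℝ) + 1 := by positivity
        rw [abs_of_pos hc, div_eq_mul_inv]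
        refine mul_le_mul_of_nonneg_left ?_ (abs_nonneg _)
        rw [← div_eq_mul_inv, ← one_div ((↑((n - 1 - ℓ) / N) : ℝ) + 1), div_le_div_iff₀ (by positivity) hc]
        have h2n := hmn ℓ hℓ
        have hcast : ((N * m ℓ : ℕ) : ℝ) ≤ ((2 * n : ℕ) : ℝ) := by exact_mod_cast h2n
        have hmc : ((m ℓ : ℕ) : ℝ) = (((n - 1 - ℓ) / N : ℕ) : ℝ) + 1 := by
          rw [hm]; push_cast; ring
        push_cast at hcast
        rw [hmc] at hcast
        linarith
end

section
/- Let $\varphi$ be an Orlicz function and $L^\varphi = L^\varphi[0,1]$ the associated Orlicz space with Luxemburg norm, with Orlicz heart $H^\varphi$. Let $\{f_n\}$ be a disjoint sequence in $H^\varphi$ such that for every subsequence $\{f_{n_k}\}$, the supremum $\bigvee_{k=1}^\infty \left|\frac{f_{n_1}+\dots+f_{n_k}}{k}\right|$ exists in $L^\varphi$ with uniformly bounded norm (at most $p$ for some fixed $p > 0$). Then $\bigvee_{n=1}^\infty \left|\frac{f_1+\dots+f_n}{n}\right| \in H^\varphi$; in particular, the Cesàro sequence of $\{f_n\}$ order converges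 to $0$ in $H^\varphi$. -/
open Filter Topology MeasureTheory Set

noncomputable section

/-- Lebesgue measure on `(0,1]`, our model of the unit interval. -/
def mu : Measure ℝ := volume.restrict (Set.Ioc 0 1)

/-- `φ` is an Orlicz function: convex, increasing, non-constant, vanishing at `0`
(and nonnegative) on `[0,∞)`. -/
def IsOrlicz (φ : ℝ → ℝ) : Prop :=
  ConvexOn ℝ (Set.Ici 0) φ ∧ MonotoneOn φ (Set.Ici 0) ∧ φ 0 = 0 ∧
    (∀ t, 0 ≤ φ t) ∧ ∃ t, 0 < t ∧ 0 < φ t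

/-- Membership in the Orlicz space `L^φ[0,1]`:
`∫_0^1 φ(|f|/c) ≤ 1` for some `c > 0`. -/
def MemLphi (φ : ℝ → ℝ) (f : ℝ → ℝ) : Prop :=
  AEStronglyMeasurable f mu ∧ ∃ c : ℝ, 0 < c ∧
    IntegrableOn (fun s => φ (|f s| / c)) (Set.Ioc 0 1) ∧
    ∫ s in Set.Ioc (0:ℝ) 1, φ (|f s| / c) ≤ 1

/-- Membership in the Orlicz heart `H^φ`: `f ∈ L^φ` and `∫_0^1 φ(|f|/c) < ∞` for all `c > 0`. -/
def MemHphi (φ : ℝ → ℝ) (f : ℝ → ℝ) : Prop :=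
  MemLphi φ f ∧ ∀ c : ℝ, 0 < c → IntegrableOn (fun s => φ (|f s| / c)) (Set.Ioc 0 1)

/-- The Luxemburg norm on `L^φ[0,1]`. -/
def luxNorm (φ : ℝ → ℝ) (f : ℝ → ℝ) : ℝ :=
  sInf {c : ℝ | 0 < c ∧ IntegrableOn (fun s => φ (|f s| / c)) (Set.Ioc 0 1) ∧
    ∫ s in Set.Ioc (0:ℝ) 1, φ (|f s| / c) ≤ 1}

/-- The conjugate Orlicz function `φ*(s) = sup { s t - φ t : t ≥ 0 }`. -/
def conjOrlicz (φ : ℝ → ℝ) (s : ℝ) : ℝ :=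
  sSup ((fun t => s * t - φ t) '' Set.Ici 0)

/-- The conjugate `φ*` is finite-valued. -/
def ConjFinite (φ : ℝ → ℝ) : Prop :=
  ∀ s : ℝ, 0 ≤ s → BddAbove ((fun t => s * t - φ t) '' Set.Ici 0)

/-- The `Δ₂`-condition: `ψ(2t) ≤ C ψ(t)` for all large `t`. -/
def Delta2 (ψ : ℝ → ℝ) : Prop :=
  ∃ C : ℝ, 0 < C ∧ ∃ t0 : ℝ, 0 < t0 ∧ ∀ t, t0 < t → ψ (2 * t) ≤ C * ψ t

/-- Cesàro sequence of a sequence of functions. -/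
def cesaroF (f : ℕ → ℝ → ℝ) (n : ℕ) (s : ℝ) : ℝ :=
  (∑ i ∈ Finset.range (n + 1), f i s) / ((n : ℝ) + 1)

/-- Order convergence in `L^φ` of a sequence of functions to a limit: dominated a.e.
convergence, the dominating function lying in `L^φ`. -/
def OrderConvLphi (φ : ℝ → ℝ) (g : ℕ → ℝ → ℝ) (l : ℝ → ℝ) : Prop :=
  MemLphi φ l ∧ ∃ h : ℝ → ℝ, MemLphi φ h ∧
    (∀ n, ∀ᵐ s ∂mu, |g n s - l s| ≤ h s) ∧
    (∀ᵐ s ∂mu, Tendsto (fun n => g n s) atTop (𝓝 (l s)))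

/-- The decreasing rearrangement of `f` (as a function on `(0,1]`). -/
def decRe (f : ℝ → ℝ) (t : ℝ) : ℝ :=
  sInf {l : ℝ | 0 ≤ l ∧ mu {x | l < |f x|} ≤ ENNReal.ofReal t}

/-- If `{f n}` is a disjoint sequence in `H^φ` such that for every subsequence the supremum
of the absolute Cesàro averages exists in `L^φ` with Luxemburg norm at most `p`, then the
supremum `⋁_n |(f 0 + ⋯ + f n)/(n+1)|` belongs to `H^φ`; in particular the Cesàro sequence
of `{f n}` order converges to `0` in `H^φ`. -/
theorem stmt7 (φ : ℝ → ℝ) (hφ : IsOrlicz φ) (p : ℝ) (hp : 0 < p)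
    (f : ℕ → ℝ → ℝ) (hmem : ∀ n, MemHphi φ (f n))
    (hdisj : ∀ n m, n ≠ m → ∀ᵐ s ∂mu, min |f n s| |f m s| = 0)
    (hsub : ∀ σ : ℕ → ℕ, StrictMono σ → ∃ g : ℝ → ℝ, MemLphi φ g ∧ luxNorm φ g ≤ p ∧
      (∀ k, ∀ᵐ s ∂mu, |cesaroF (f ∘ σ) k s| ≤ g s) ∧
      (∀ g' : ℝ → ℝ, MemLphi φ g' → (∀ k, ∀ᵐ s ∂mu, |cesaroF (f ∘ σ) k s| ≤ g' s) →
        ∀ᵐ s ∂mu, g s ≤ g' s)) :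
    ∃ G : ℝ → ℝ, MemHphi φ G ∧
      (∀ᵐ s ∂mu, BddAbove (Set.range fun n => |cesaroF f n s|)) ∧
      (∀ᵐ s ∂mu, G s = ⨆ n, |cesaroF f n s|) ∧
      (∀ᵐ s ∂mu, Tendsto (fun n => cesaroF f n s) atTop (𝓝 0)) := by

  classical
  have hmono : ∀ a b : ℝ, 0 ≤ a → a ≤ b → φ a ≤ φ b := fun a b ha hab =>
    hφ.2.1 ha (ha.trans hab) hab
  have hnn : ∀ t, 0 ≤ φ t := hφ.2.2.2.1
  have hψ : Measurable (fun t : ℝ => φ (max t 0)) :=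
    Monotone.measurable (fun a b hab => hmono _ _ (le_max_right a 0) (max_le_max hab le_rfl))
  have hfae : ∀ n, AEMeasurable (f n) mu := fun n => (hmem n).1.1.aemeasurable
  set u : ℕ → ℝ → ℝ := fun n s => |cesaroF f n s| with hu_def
  have huae : ∀ n, AEMeasurable (u n) mu := by
    intro n
    have h1 : AEMeasurable (fun s => (∑ i ∈ Finset.range (n + 1), f i s) / ((n : ℝ) + 1)) mu :=
      (Finset.aemeasurable_fun_sum _ fun i _ => hfae i).div_const _
    exact measurable_abs.comp_aemeasurable h1
  set u' : ℕ → ℝ → ℝ := fun n => (huae n).mk (u n) with hu'_def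
  have hu'meas : ∀ n, Measurable (u' n) := fun n => (huae n).measurable_mk
  have hu'eq : ∀ n, u n =ᵐ[mu] u' n := fun n => (huae n).ae_eq_mk
  set G : ℝ → ℝ := fun s => (⨆ n, ENNReal.ofReal (u' n s)).toReal with hG_def
  have hGmeas : Measurable G :=
    (Measurable.iSup fun n => (hu'meas n).ennreal_ofReal).ennreal_toReal
  have hGnn : ∀ s, 0 ≤ G s := fun _ => ENNReal.toReal_nonneg
  have hE : ∀ᵐ s ∂mu, (∀ n m : ℕ, n ≠ m → min |f n s| |f m s| = 0) ∧ ∀ n, u n s = u' n s := by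
    refine ((ae_all_iff.2 fun n => ae_all_iff.2 fun m => ?_).and (ae_all_iff.2 fun n => hu'eq n))
    rcases eq_or_ne n m with h | h
    · exact Filter.Eventually.of_forall fun s hnm => absurd h hnm
    · filter_upwards [hdisj n m h] with s hs _ using hs
  have hpt : ∀ s, (∀ n m : ℕ, n ≠ m → min |f n s| |f m s| = 0) → (∀ n, u n s = u' n s) →
      ∃ n0 : ℕ, (∀ m, m ≠ n0 → f m s = 0) ∧ (∀ n, u n s ≤ u n0 s) ∧
        u n0 s = |f n0 s| / ((n0 : ℝ) + 1) ∧ G s = u n0 s ∧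
        (⨆ n, u n s) = u n0 s ∧ BddAbove (Set.range fun n => u n s) ∧
        Tendsto (fun n => cesaroF f n s) atTop (𝓝 0) := by
    intro s hA hu'
    have hex : ∃ n0 : ℕ, ∀ m, m ≠ n0 → f m s = 0 := by
      by_cases h : ∃ n, f n s ≠ 0
      · obtain ⟨n0, hn0⟩ := h
        refine ⟨n0, fun m hm => ?_⟩
        have h0 := hA n0 m fun e => hm e.symm
        rcases min_cases |f n0 s| |f m s| with ⟨h1, _⟩ | ⟨h1, _⟩
        · exact absurd (abs_eq_zero.1 (h1 ▸ h0)) hn0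
        · exact abs_eq_zero.1 (h1 ▸ h0)
      · push_neg at h
        exact ⟨0, fun m _ => h m⟩
    obtain ⟨n0, hzero⟩ := hex
    have hform : ∀ n, cesaroF f n s = if n0 ≤ n then f n0 s / ((n : ℝ) + 1) else 0 := by
      intro n
      by_cases hle : n0 ≤ n
      · have hsum : ∑ i ∈ Finset.range (n + 1), f i s = f n0 s :=
          Finset.sum_eq_single_of_mem n0 (Finset.mem_range.2 (Nat.lt_succ_of_le hle))
            fun b _ hb => hzero b hb
        simp [cesaroF, hsum, hle]
      · have hsum : ∑ i ∈ Finset.range (n + 1), f i s = 0 :=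
          Finset.sum_eq_zero fun i hi => hzero i (by
            have := Finset.mem_range.1 hi; omega)
        simp [cesaroF, hsum, hle]
    have hval : u n0 s = |f n0 s| / ((n0 : ℝ) + 1) := by
      show |cesaroF f n0 s| = _
      rw [hform n0, if_pos le_rfl, abs_div, abs_of_pos (by positivity : (0:ℝ) < (n0:ℝ) + 1)]
    have hboundn : ∀ n, u n s ≤ u n0 s := by
      intro n
      rw [hval]
      show |cesaroF f n s| ≤ _
      rw [hform n]
      split_ifs with h
      · rw [abs_div, abs_of_pos (by positivity : (0:ℝ) < (n:ℝ) + 1)]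
        have hcast : ((n0:ℝ) + 1) ≤ (n:ℝ) + 1 := by
          have : (n0:ℝ) ≤ (n:ℝ) := Nat.cast_le.2 h
          linarith
        exact div_le_div_of_nonneg_left (abs_nonneg _) (by positivity) hcast
      · simp only [abs_zero]
        positivity
    have hGs : G s = u n0 s := by
      show (⨆ n, ENNReal.ofReal (u' n s)).toReal = u n0 s
      have h2 : (⨆ n, ENNReal.ofReal (u' n s)) = ENNReal.ofReal (u n0 s) := by
        simp only [← hu']
        exact le_antisymm (iSup_le fun n => ENNReal.ofReal_le_ofReal (hboundn n))
          (le_iSup (fun n => ENNReal.ofReal (u n s)) n0)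
      rw [h2, ENNReal.toReal_ofReal (abs_nonneg _)]
    have hbdd : BddAbove (Set.range fun n => u n s) :=
      ⟨u n0 s, by rintro x ⟨n, rfl⟩; exact hboundn n⟩
    have hsup : (⨆ n, u n s) = u n0 s :=
      le_antisymm (ciSup_le hboundn) (le_ciSup hbdd n0)
    have htend : Tendsto (fun n => cesaroF f n s) atTop (𝓝 0) := by
      have h1 : Tendsto (fun n : ℕ => f n0 s / ((n:ℝ) + 1)) atTop (𝓝 0) := by
        have h2 := (tendsto_const_div_atTop_nhds_zero_nat (f n0 s)).comp
          (tendsto_add_atTop_nat 1)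
        refine h2.congr fun n => ?_
        simp only [Function.comp]
        push_cast
        ring_nf
      refine Tendsto.congr' ?_ h1
      filter_upwards [eventually_ge_atTop n0] with n hn
      rw [hform n, if_pos hn]
    exact ⟨n0, hzero, hboundn, hval, hGs, hsup, hbdd, htend⟩
  have hInt : ∀ c : ℝ, 0 < c → IntegrableOn (fun s => φ (|G s| / c)) (Set.Ioc 0 1) := by
    intro c hc
    obtain ⟨N, hNgt⟩ := exists_nat_gt (2 * p / c + 1)
    have h2p : 0 < 2 * p / c := by positivity
    have hNR1 : (1:ℝ) < (N:ℝ) := by linarith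
    have hNpos : 0 < N := by exact_mod_cast Nat.cast_pos.1 (by linarith : (0:ℝ) < (N:ℝ))
    have hNp : p < c * N / 2 := by
      have h3 : 2 * p / c < (N:ℝ) := by linarith
      have h4 : 2 * p < (N:ℝ) * c := (div_lt_iff₀ hc).1 h3
      linarith
    have hσ : ∀ ℓ : ℕ, StrictMono fun m => m * N + ℓ := by
      intro ℓ a b hab
      have h7 : a * N < b * N := Nat.mul_lt_mul_of_pos_right hab hNpos
      show a * N + ℓ < b * N + ℓ
      omega
    have hgall := fun ℓ : Fin N => hsub (fun m => m * N + ℓ.1) (hσ ℓ.1)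
    choose g hgL hgnorm hgdom _hgmin using hgall
    have hc' : ∀ ℓ : Fin N, ∃ c' : ℝ, ((0 < c' ∧
        IntegrableOn (fun s => φ (|g ℓ s| / c')) (Set.Ioc 0 1) ∧
        ∫ s in Set.Ioc (0:ℝ) 1, φ (|g ℓ s| / c') ≤ 1)) ∧ c' < c * N / 2 := by
      intro ℓ
      obtain ⟨c0, hc0⟩ := (hgL ℓ).2
      have hne : {c' : ℝ | 0 < c' ∧ IntegrableOn (fun s => φ (|g ℓ s| / c')) (Set.Ioc 0 1) ∧
          ∫ s in Set.Ioc (0:ℝ) 1, φ (|g ℓ s| / c') ≤ 1}.Nonempty := ⟨c0, hc0⟩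
      obtain ⟨c', hc'mem, hc'lt⟩ :=
        exists_lt_of_csInf_lt hne (lt_of_le_of_lt (hgnorm ℓ) hNp)
      exact ⟨c', hc'mem, hc'lt⟩
    choose c' hc'mem hc'lt using hc'
    set F : ℝ → ℝ := fun s =>
      (∑ n ∈ Finset.range N, φ (|f n s| / (c * ((n:ℝ) + 1)))) +
        ∑ ℓ : Fin N, φ (|g ℓ s| / c' ℓ) with hF_def
    have hFint : IntegrableOn F (Set.Ioc 0 1) := by
      apply Integrable.add
      · exact integrable_finset_sum _ fun n _ => (hmem n).2 _ (by positivity)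
      · exact integrable_finset_sum _ fun ℓ _ => (hc'mem ℓ).2.1
    have hdomae : ∀ᵐ s ∂mu, ∀ ℓ : Fin N, ∀ k,
        |cesaroF (f ∘ fun m => m * N + ℓ.1) k s| ≤ g ℓ s :=
      ae_all_iff.2 fun ℓ => ae_all_iff.2 fun k => hgdom ℓ k
    have hbnd : ∀ᵐ s ∂mu, ‖φ (|G s| / c)‖ ≤ F s := by
      filter_upwards [hE, hdomae] with s hs hdom
      obtain ⟨n0, hzero, hboundn, hval, hGs, -, -, -⟩ := hpt s hs.1 hs.2
      rw [Real.norm_eq_abs, abs_of_nonneg (hnn _), abs_of_nonneg (hGnn s), hGs, hval]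
      have h2 : 0 ≤ ∑ ℓ : Fin N, φ (|g ℓ s| / c' ℓ) :=
        Finset.sum_nonneg fun ℓ _ => hnn _
      have h2' : 0 ≤ ∑ n ∈ Finset.range N, φ (|f n s| / (c * ((n:ℝ) + 1))) :=
        Finset.sum_nonneg fun i _ => hnn _
      by_cases hcase : n0 < N
      · have hterm : |f n0 s| / ((n0:ℝ) + 1) / c = |f n0 s| / (c * ((n0:ℝ) + 1)) := by
          rw [div_div, mul_comm]
        rw [hterm]
        have h1 : φ (|f n0 s| / (c * ((n0:ℝ) + 1))) ≤
            ∑ n ∈ Finset.range N, φ (|f n s| / (c * ((n:ℝ) + 1))) :=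
          Finset.single_le_sum (f := fun n => φ (|f n s| / (c * ((n:ℝ) + 1))))
            (fun i _ => hnn _) (Finset.mem_range.2 hcase)
        simp only [hF_def]
        linarith
      · push_neg at hcase
        set m := n0 / N with hm_def
        set ℓ := n0 % N with hℓ_def
        have hℓN : ℓ < N := Nat.mod_lt _ hNpos
        have hm1 : 1 ≤ m := Nat.div_pos hcase hNpos
        have hn0eq : m * N + ℓ = n0 := by
          rw [hm_def, hℓ_def, mul_comm]
          exact Nat.div_add_mod n0 N
        set ℓ' : Fin N := ⟨ℓ, hℓN⟩ with hℓ'_def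
        have hces : cesaroF (f ∘ fun i => i * N + ℓ) m s = f n0 s / ((m:ℝ) + 1) := by
          have hsum : ∑ i ∈ Finset.range (m + 1), f (i * N + ℓ) s = f (m * N + ℓ) s :=
            Finset.sum_eq_single_of_mem m (Finset.mem_range.2 m.lt_succ_self)
              fun i _ hi => hzero _ (by
                intro he
                rw [← hn0eq] at he
                have h5 : i * N = m * N := by omega
                exact hi (Nat.eq_of_mul_eq_mul_right hNpos h5))
          rw [hn0eq] at hsum
          simp [cesaroF, Function.comp, hsum]
        have hgb : |f n0 s| / ((m:ℝ) + 1) ≤ g ℓ' s := by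
          have h6 := hdom ℓ' m
          rw [show (ℓ' : ℕ) = ℓ from rfl, hces] at h6
          rwa [abs_div, abs_of_pos (by positivity : (0:ℝ) < (m:ℝ) + 1)] at h6
        have hgnn' : 0 ≤ g ℓ' s := le_trans (by positivity) hgb
        have hA : |f n0 s| ≤ g ℓ' s * ((m:ℝ) + 1) := (div_le_iff₀ (by positivity)).1 hgb
        have hc'posℓ : 0 < c' ℓ' := (hc'mem ℓ').1
        have hkey : |f n0 s| / ((n0:ℝ) + 1) / c ≤ g ℓ' s / c' ℓ' := by
          rw [div_div, div_le_div_iff₀ (by positivity) hc'posℓ]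
          have hcast : ((n0:ℝ)) = (m:ℝ) * N + (ℓ:ℝ) := by
            rw [← hn0eq]; push_cast; ring
          have hm1R : (1:ℝ) ≤ (m:ℝ) := by exact_mod_cast hm1
          have hℓ0 : (0:ℝ) ≤ (ℓ:ℝ) := by positivity
          have hNm : (N:ℝ) ≤ (N:ℝ) * (m:ℝ) := by
            nlinarith [hm1R, (by positivity : (0:ℝ) ≤ (N:ℝ))]
          have hstep : c * (N:ℝ) / 2 * ((m:ℝ) + 1) ≤ ((n0:ℝ) + 1) * c := by
            rw [hcast]
            nlinarith [mul_le_mul_of_nonneg_left hNm hc.le,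
              mul_nonneg hc.le hℓ0, hc, hm1R]
          calc |f n0 s| * c' ℓ' ≤ (g ℓ' s * ((m:ℝ) + 1)) * c' ℓ' :=
                mul_le_mul_of_nonneg_right hA hc'posℓ.le
            _ = g ℓ' s * (c' ℓ' * ((m:ℝ) + 1)) := by ring
            _ ≤ g ℓ' s * (c * (N:ℝ) / 2 * ((m:ℝ) + 1)) := by
                refine mul_le_mul_of_nonneg_left ?_ hgnn'
                exact mul_le_mul_of_nonneg_right (hc'lt ℓ').le (by positivity)
            _ ≤ g ℓ' s * (((n0:ℝ) + 1) * c) := mul_le_mul_of_nonneg_left hstep hgnn'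
        have hφle : φ (|f n0 s| / ((n0:ℝ) + 1) / c) ≤ φ (|g ℓ' s| / c' ℓ') := by
          rw [abs_of_nonneg hgnn']
          exact hmono _ _ (by positivity) hkey
        have h1 : φ (|g ℓ' s| / c' ℓ') ≤ ∑ ℓ : Fin N, φ (|g ℓ s| / c' ℓ) :=
          Finset.single_le_sum (f := fun i => φ (|g i s| / c' i))
            (fun i _ => hnn _) (Finset.mem_univ ℓ')
        simp only [hF_def]
        linarith
    have hφGmeas : AEStronglyMeasurable (fun s => φ (|G s| / c)) mu := by
      have heq : (fun s => φ (|G s| / c)) = (fun t => φ (max t 0)) ∘ fun s => G s / c := by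
        funext s
        simp only [Function.comp]
        rw [abs_of_nonneg (hGnn s), max_eq_left (div_nonneg (hGnn s) hc.le)]
      rw [heq]
      exact (hψ.comp (hGmeas.div_const c)).aestronglyMeasurable
    exact Integrable.mono' hFint hφGmeas hbnd
  obtain ⟨g0, hg0L, -, hg0dom, -⟩ := hsub id strictMono_id
  obtain ⟨-, c0, hc0, hint0, hle1⟩ := hg0L
  have hGle : ∀ᵐ s ∂mu, G s ≤ g0 s := by
    filter_upwards [hE, ae_all_iff.2 hg0dom] with s hs hdom
    obtain ⟨n0, -, -, -, hGs, -, -, -⟩ := hpt s hs.1 hs.2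
    rw [hGs]
    exact hdom n0
  have hle1' : ∫ s in Set.Ioc (0:ℝ) 1, φ (|G s| / c0) ≤ 1 := by
    have hmono' : (fun s => φ (|G s| / c0)) ≤ᵐ[mu] fun s => φ (|g0 s| / c0) := by
      filter_upwards [hGle] with s hs
      have h1 : |G s| ≤ |g0 s| := by
        rw [abs_of_nonneg (hGnn s)]
        exact hs.trans (le_abs_self _)
      have h2 : |G s| / c0 ≤ |g0 s| / c0 := by gcongr
      exact hmono _ _ (by positivity) h2
    calc ∫ s in Set.Ioc (0:ℝ) 1, φ (|G s| / c0)
        ≤ ∫ s in Set.Ioc (0:ℝ) 1, φ (|g0 s| / c0) :=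
          integral_mono_ae (hInt c0 hc0) hint0 hmono'
      _ ≤ 1 := hle1
  refine ⟨G, ⟨⟨hGmeas.aestronglyMeasurable, c0, hc0, hInt c0 hc0, hle1'⟩, hInt⟩, ?_, ?_, ?_⟩
  · filter_upwards [hE] with s hs
    obtain ⟨n0, -, -, -, -, -, hbdd, -⟩ := hpt s hs.1 hs.2
    exact hbdd
  · filter_upwards [hE] with s hs
    obtain ⟨n0, -, -, -, hGs, hsup, -, -⟩ := hpt s hs.1 hs.2
    rw [hGs]
    exact hsup.symm
  · filter_upwards [hE] with s hs
    obtain ⟨n0, -, -, -, -, -, -, htend⟩ := hpt s hs.1 hs.2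
    exact htend
end
end

section
/- Let $\varphi$ be an Orlicz function with finite conjugate $\varphi^*$, and let $f_n = \sum_{t\in F_n} t\chi_{A_t}$ be as built from an eligible sequence $\mathcal{F}$ with $|A_t| = w_t/\varphi(t)$ and the $A_t$ pairwise disjoint. If $\lim_{m,n\to\infty} b_{n,m}(\mathcal{F}) = 0$, where $b_{n,m}(\mathcal{F}) = \sum_{t\in F_n} w_t \frac{m\varphi(t/m)}{\varphi(t)}$, then $\{f_n\}$ is weakly null in $L^\varphi$. -/
open Filter Topology MeasureTheory Set

noncomputable section

/-- pointwise identity for a function applied to a disjointly supported simple sum -/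
lemma disj_sum_apply {ι : Type*} (T : Finset ι) (B : ι → Set ℝ)
    (hdisj : ∀ i ∈ T, ∀ j ∈ T, i ≠ j → Disjoint (B i) (B j))
    (c : ι → ℝ) (g : ℝ → ℝ) (hg : g 0 = 0) (s : ℝ) :
    g (∑ i ∈ T, c i * (B i).indicator 1 s) = ∑ i ∈ T, g (c i) * (B i).indicator 1 s := by
  classical
  by_cases hs : ∃ i ∈ T, s ∈ B i
  · obtain ⟨i₀, hi₀, hsi₀⟩ := hs
    have hz : ∀ j ∈ T, j ≠ i₀ → (B j).indicator (1 : ℝ → ℝ) s = 0 := by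
      intro j hj hne
      have : s ∉ B j := fun hsj => (Set.disjoint_left.mp (hdisj j hj i₀ hi₀ hne)) hsj hsi₀
      simp [Set.indicator_of_notMem this]
    rw [Finset.sum_eq_single i₀ (fun j hj hne => by rw [hz j hj hne, mul_zero])
        (fun hnm => absurd hi₀ hnm),
      Finset.sum_eq_single i₀ (fun j hj hne => by rw [hz j hj hne, mul_zero])
        (fun hnm => absurd hi₀ hnm)]
    simp [Set.indicator_of_mem hsi₀]
  · push_neg at hs
    rw [Finset.sum_eq_zero (fun j hj => by simp [Set.indicator_of_notMem (hs j hj)]),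
      Finset.sum_eq_zero (fun j hj => by simp [Set.indicator_of_notMem (hs j hj)]), hg]

/-- Given an eligible sequence `F, w`, disjoint measurable sets `A t ⊆ (0,1]` of measure
`w t / φ t`, and `f n = ∑_{t ∈ F n} t · χ_{A t}`, if
`b_{n,m} = ∑_{t ∈ F n} w t · m φ(t/m)/φ(t) → 0` as `n, m → ∞`, then `{f n}` is weakly
null in `L^φ`. -/
theorem stmt15 (φ : ℝ → ℝ) (hφ : IsOrlicz φ) (hfin : ConjFinite φ)
    (F : ℕ → Finset ℝ) (w : ℝ → ℝ)
    (hFne : ∀ n, (F n).Nonempty)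
    (hFpos : ∀ n, ∀ t ∈ F n, 0 < t)
    (hFsep : ∀ n, ∀ t ∈ F n, ∀ t' ∈ F (n + 1), t < t')
    (hFinfty : Tendsto (fun n => (F n).min' (hFne n)) atTop atTop)
    (hwpos : ∀ n, ∀ t ∈ F n, 0 < w t) (hw1 : ∀ n, ∑ t ∈ F n, w t = 1)
    (A : ℝ → Set ℝ)
    (hAmeas : ∀ t, (∃ n, t ∈ F n) → MeasurableSet (A t))
    (hAsub : ∀ t, (∃ n, t ∈ F n) → A t ⊆ Set.Ioc 0 1)
    (hAdisj : ∀ t t', t ≠ t' → (∃ n, t ∈ F n) → (∃ n, t' ∈ F n) → Disjoint (A t) (A t'))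
    (hAvol : ∀ n, ∀ t ∈ F n, volume (A t) = ENNReal.ofReal (w t / φ t))
    (f : ℕ → ℝ → ℝ) (hf : ∀ n, f n = fun s => ∑ t ∈ F n, t * (A t).indicator 1 s)
    (hb : ∀ ε : ℝ, 0 < ε → ∃ N : ℕ, ∀ n ≥ N, ∀ m ≥ N,
      (∑ t ∈ F n, w t * ((m : ℝ) * φ (t / m) / φ t)) < ε) :
    ∀ G : (ℝ → ℝ) →ₗ[ℝ] ℝ,
      (∃ K : ℝ, ∀ h : ℝ → ℝ, MemLphi φ h → |G h| ≤ K * luxNorm φ h) →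
      Tendsto (fun n => G (f n)) atTop (𝓝 0) := by
  classical
  obtain ⟨_, _, hφ0, hφnn, _⟩ := hφ
  intro G hG
  obtain ⟨K, hK⟩ := hG
  -- F's are ordered, hence disjoint
  have hFlt : ∀ n n', n < n' → ∀ t ∈ F n, ∀ t' ∈ F n', t < t' := by
    intro n n' hlt
    induction n' with
    | zero => omega
    | succ n'' ih =>
      rcases Nat.lt_or_ge n n'' with hlt' | hge
      · intro t ht t' ht'
        obtain ⟨u, hu⟩ := hFne n''
        exact lt_trans (ih hlt' t ht u hu) (hFsep n'' u hu t' ht')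
      · have : n = n'' := by omega
        subst this
        exact hFsep n
  have hFuniq : ∀ {n n' : ℕ} {t : ℝ}, t ∈ F n → t ∈ F n' → n = n' := by
    intro n n' t ht ht'
    rcases lt_trichotomy n n' with hlt | heq | hgt
    · exact absurd (hFlt n n' hlt t ht t ht') (lt_irrefl t)
    · exact heq
    · exact absurd (hFlt n' n hgt t ht' t ht) (lt_irrefl t)
  -- luxNorm is nonneg; upgrade K
  have hlux0 : ∀ h : ℝ → ℝ, 0 ≤ luxNorm φ h :=
    fun h => Real.sInf_nonneg (fun x hx => le_of_lt hx.1)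
  set K' : ℝ := max K 1 with hK'def
  have hK'1 : (1:ℝ) ≤ K' := le_max_right K 1
  have hK'pos : (0:ℝ) < K' := lt_of_lt_of_le one_pos hK'1
  have hK' : ∀ h : ℝ → ℝ, MemLphi φ h → |G h| ≤ K' * luxNorm φ h := fun h hh =>
    le_trans (hK h hh) (mul_le_mul_of_nonneg_right (le_max_left K 1) (hlux0 h))
  -- measurability of the f n
  have hfmeas : ∀ n, Measurable (f n) := by
    intro n
    rw [hf n]
    exact Finset.measurable_sum _ (fun t ht =>
      ((measurable_one.indicator (hAmeas t ⟨n, ht⟩)).const_mul t))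
  by_contra hcon
  rw [Metric.tendsto_atTop] at hcon
  push_neg at hcon
  obtain ⟨ε₀, hε₀, hfreq⟩ := hcon
  simp only [Real.dist_eq, sub_zero] at hfreq
  set ε : ℝ := ε₀ / (2 * K') with hεdef
  have hεpos : 0 < ε := div_pos hε₀ (by linarith)
  obtain ⟨N₀, hN₀⟩ := hb ε hεpos
  -- the set of bad indices beyond N₀ is infinite
  have hinf : {n : ℕ | N₀ ≤ n ∧ ε₀ ≤ |G (f n)|}.Infinite := by
    apply Set.infinite_of_not_bddAbove
    rintro ⟨b, hbdd⟩
    obtain ⟨n, hn1, hn2⟩ := hfreq (max N₀ (b + 1))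
    have hnmem : n ∈ {n : ℕ | N₀ ≤ n ∧ ε₀ ≤ |G (f n)|} :=
      ⟨le_trans (le_max_left _ _) hn1, hn2⟩
    have hb1 : n ≤ b := hbdd hnmem
    have hb2 : b + 1 ≤ n := le_trans (le_max_right _ _) hn1
    omega
  -- pick k, a set S of k bad indices, and the scale m
  set k : ℕ := ⌈2 * K' * ((N₀:ℝ) + 2) / ε₀⌉₊ + 1 with hkdef
  obtain ⟨S, hSsub, hScard⟩ := hinf.exists_subset_card_eq k
  set m : ℕ := N₀ + ⌈(k:ℝ) * ε⌉₊ + 1 with hmdef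
  have hm1 : (1:ℝ) ≤ (m:ℝ) := by
    have : 1 ≤ m := by omega
    exact_mod_cast this
  have hmpos : (0:ℝ) < (m:ℝ) := lt_of_lt_of_le one_pos hm1
  have hmne : (m:ℝ) ≠ 0 := ne_of_gt hmpos
  have hmN₀ : N₀ ≤ m := by omega
  have hkεm : (k:ℝ) * ε ≤ (m:ℝ) := by
    have h1 : (k:ℝ) * ε ≤ (⌈(k:ℝ) * ε⌉₊ : ℝ) := Nat.le_ceil _
    have h2 : ((⌈(k:ℝ) * ε⌉₊ : ℕ) : ℝ) ≤ (m:ℝ) := by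
      have : ⌈(k:ℝ) * ε⌉₊ ≤ m := by omega
      exact_mod_cast this
    linarith
  have hmub : (m:ℝ) ≤ (N₀:ℝ) + (k:ℝ) * ε + 2 := by
    have h1 : (⌈(k:ℝ) * ε⌉₊ : ℝ) < (k:ℝ) * ε + 1 :=
      Nat.ceil_lt_add_one (by positivity)
    have h2 : (m:ℝ) = (N₀:ℝ) + (⌈(k:ℝ) * ε⌉₊ : ℝ) + 1 := by
      rw [hmdef]; push_cast; ring
    linarith
  -- signs and the test function h
  set σ : ℕ → ℝ := fun n => if 0 ≤ G (f n) then 1 else -1 with hσdef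
  have hσabs : ∀ n, |σ n| = 1 := by
    intro n; simp only [hσdef]; split_ifs <;> norm_num
  set h : ℝ → ℝ := fun s => ∑ n ∈ S, σ n * f n s with hhdef
  -- sigma-type indexing
  set T : Finset ((_ : ℕ) × ℝ) := S.sigma F with hTdef
  have hTmem : ∀ p ∈ T, p.1 ∈ S ∧ p.2 ∈ F p.1 := by
    intro p hp
    exact Finset.mem_sigma.mp hp
  have hTdisj : ∀ p ∈ T, ∀ q ∈ T, p ≠ q → Disjoint (A p.2) (A q.2) := by
    intro p hp q hq hne
    obtain ⟨hp1, hp2⟩ := hTmem p hp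
    obtain ⟨hq1, hq2⟩ := hTmem q hq
    have htne : p.2 ≠ q.2 := by
      intro he
      apply hne
      have h1 : p.1 = q.1 := hFuniq hp2 (he ▸ hq2)
      exact Sigma.ext h1 (by rw [he])
    exact hAdisj p.2 q.2 htne ⟨p.1, hp2⟩ ⟨q.1, hq2⟩
  -- h as one disjointly supported simple sum
  have hhs : ∀ s, h s = ∑ p ∈ T, (σ p.1 * p.2) * (A p.2).indicator 1 s := by
    intro s
    simp only [hhdef, hTdef]
    rw [Finset.sum_sigma]
    apply Finset.sum_congr rfl
    intro n _
    rw [hf n, Finset.mul_sum]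
    apply Finset.sum_congr rfl
    intro t _
    ring
  -- pointwise modular identity
  have hpt : ∀ s, φ (|h s| / m) =
      ∑ p ∈ T, φ (|σ p.1 * p.2| / m) * (A p.2).indicator 1 s := by
    intro s
    rw [hhs s]
    exact disj_sum_apply T (fun p => A p.2) hTdisj (fun p => σ p.1 * p.2)
      (fun x => φ (|x| / m)) (by simpa using hφ0) s
  have habsc : ∀ p ∈ T, |σ p.1 * p.2| = p.2 := by
    intro p hp
    obtain ⟨hp1, hp2⟩ := hTmem p hp
    rw [abs_mul, hσabs, one_mul, abs_of_pos (hFpos p.1 p.2 hp2)]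
  -- measure facts
  have hmuA : ∀ p ∈ T, mu (A p.2) = ENNReal.ofReal (w p.2 / φ p.2) := by
    intro p hp
    obtain ⟨hp1, hp2⟩ := hTmem p hp
    rw [mu, Measure.restrict_apply (hAmeas p.2 ⟨p.1, hp2⟩),
      Set.inter_eq_self_of_subset_left (hAsub p.2 ⟨p.1, hp2⟩)]
    exact hAvol p.1 p.2 hp2
  have hmuAfin : ∀ p ∈ T, mu (A p.2) < ⊤ := by
    intro p hp; rw [hmuA p hp]; exact ENNReal.ofReal_lt_top
  -- each summand is integrable
  have hconst : ∀ (c : ℝ) (Bs : Set ℝ),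
      (fun s => c * Bs.indicator (1 : ℝ → ℝ) s) = Bs.indicator (fun _ => c) := by
    intro c Bs; funext s; by_cases hs : s ∈ Bs <;> simp [hs]
  have hint : ∀ p ∈ T, Integrable
      (fun s => φ (|σ p.1 * p.2| / m) * (A p.2).indicator 1 s) mu := by
    intro p hp
    obtain ⟨hp1, hp2⟩ := hTmem p hp
    rw [hconst]
    exact (integrable_indicator_iff (hAmeas p.2 ⟨p.1, hp2⟩)).mpr
      (integrableOn_const (hmuAfin p hp).ne)
  -- integrability of the modular
  have hmodint : IntegrableOn (fun s => φ (|h s| / m)) (Set.Ioc 0 1) := by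
    have heq : (fun s => φ (|h s| / m)) =
        fun s => ∑ p ∈ T, φ (|σ p.1 * p.2| / m) * (A p.2).indicator 1 s := funext hpt
    rw [IntegrableOn, heq]
    exact integrable_finset_sum T hint
  -- value of the modular
  have hmodval : ∫ s in Set.Ioc (0:ℝ) 1, φ (|h s| / m) =
      ∑ p ∈ T, φ (p.2 / m) * (w p.2 / φ p.2) := by
    have h1 : ∫ s in Set.Ioc (0:ℝ) 1, φ (|h s| / m) =
        ∑ p ∈ T, ∫ s, φ (|σ p.1 * p.2| / m) * (A p.2).indicator 1 s ∂mu := by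
      rw [show (fun s => φ (|h s| / m)) =
        fun s => ∑ p ∈ T, φ (|σ p.1 * p.2| / m) * (A p.2).indicator 1 s from funext hpt]
      exact integral_finset_sum T hint
    rw [h1]
    apply Finset.sum_congr rfl
    intro p hp
    obtain ⟨hp1, hp2⟩ := hTmem p hp
    rw [hconst, integral_indicator_const _ (hAmeas p.2 ⟨p.1, hp2⟩), measureReal_def, hmuA p hp,
      ENNReal.toReal_ofReal (div_nonneg (le_of_lt (hwpos p.1 p.2 hp2)) (hφnn p.2)),
      habsc p hp, smul_eq_mul, mul_comm]
  -- bound the modular by 1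
  have hSne : S.Nonempty := by
    rw [← Finset.card_pos, hScard]; omega
  have hmodbound : ∑ p ∈ T, φ (p.2 / m) * (w p.2 / φ p.2) ≤ 1 := by
    have hterm : ∀ t : ℝ, φ (t / (m:ℝ)) * (w t / φ t) =
        w t * ((m:ℝ) * φ (t / m) / φ t) / (m:ℝ) := by
      intro t
      rw [eq_div_iff hmne, div_eq_mul_inv, div_eq_mul_inv, div_eq_mul_inv]
      ring
    have h2 : ∑ p ∈ T, φ (p.2 / m) * (w p.2 / φ p.2) =
        ∑ n ∈ S, (∑ t ∈ F n, w t * ((m:ℝ) * φ (t / m) / φ t)) / m := by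
      simp only [hTdef]
      rw [Finset.sum_sigma]
      apply Finset.sum_congr rfl
      intro n _
      rw [Finset.sum_div]
      exact Finset.sum_congr rfl (fun t _ => hterm t)
    have h3 : ∑ n ∈ S, (∑ t ∈ F n, w t * ((m:ℝ) * φ (t / m) / φ t)) / m
        < ∑ n ∈ S, ε / m := by
      apply Finset.sum_lt_sum_of_nonempty hSne
      intro n hn
      have hnN₀ : N₀ ≤ n := (hSsub hn).1
      exact div_lt_div_of_pos_right (hN₀ n hnN₀ m hmN₀) hmpos
    have h4 : ∑ n ∈ S, ε / m = (k:ℝ) * ε / m := by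
      rw [Finset.sum_const, hScard, nsmul_eq_mul, mul_div_assoc]
    have h5 : (k:ℝ) * ε / m ≤ 1 := (div_le_one hmpos).mpr hkεm
    rw [h2]
    linarith
  -- h is in L^φ with norm at most m
  have hmem : (m:ℝ) ∈ {c : ℝ | 0 < c ∧ IntegrableOn (fun s => φ (|h s| / c)) (Set.Ioc 0 1) ∧
      ∫ s in Set.Ioc (0:ℝ) 1, φ (|h s| / c) ≤ 1} :=
    ⟨hmpos, hmodint, by rw [hmodval]; exact hmodbound⟩
  have hluxle : luxNorm φ h ≤ m := csInf_le ⟨0, fun x hx => le_of_lt hx.1⟩ hmem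
  have hhmeas : Measurable h := by
    simp only [hhdef]
    exact Finset.measurable_sum S (fun n _ => (hfmeas n).const_mul (σ n))
  have hhmem : MemLphi φ h :=
    ⟨hhmeas.aestronglyMeasurable, m, hmpos, hmodint, by rw [hmodval]; exact hmodbound⟩
  -- lower bound for G h
  have hGh : G h = ∑ n ∈ S, σ n * G (f n) := by
    have heq : h = ∑ n ∈ S, σ n • f n := by
      funext s
      simp only [hhdef]
      rw [Finset.sum_apply]
      exact Finset.sum_congr rfl (fun n _ => by simp [Pi.smul_apply, smul_eq_mul])
    rw [heq, map_sum]
    exact Finset.sum_congr rfl (fun n _ => by rw [G.map_smul, smul_eq_mul])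
  have hσG : ∀ n, σ n * G (f n) = |G (f n)| := by
    intro n
    simp only [hσdef]
    split_ifs with hs
    · rw [one_mul, abs_of_nonneg hs]
    · rw [neg_one_mul, abs_of_neg (lt_of_not_ge hs)]
  have hGhlb : (k:ℝ) * ε₀ ≤ G h := by
    rw [hGh]
    calc (k:ℝ) * ε₀ = ∑ _n ∈ S, ε₀ := by rw [Finset.sum_const, hScard, nsmul_eq_mul]
      _ ≤ ∑ n ∈ S, σ n * G (f n) := Finset.sum_le_sum
          (fun n hn => by rw [hσG n]; exact (hSsub hn).2)
  have hfinal : (k:ℝ) * ε₀ ≤ K' * ((N₀:ℝ) + (k:ℝ) * ε + 2) :=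
    calc (k:ℝ) * ε₀ ≤ |G h| := le_trans hGhlb (le_abs_self _)
      _ ≤ K' * luxNorm φ h := hK' h hhmem
      _ ≤ K' * m := mul_le_mul_of_nonneg_left hluxle (le_of_lt hK'pos)
      _ ≤ K' * ((N₀:ℝ) + (k:ℝ) * ε + 2) := mul_le_mul_of_nonneg_left hmub (le_of_lt hK'pos)
  have hK'ε : K' * ε = ε₀ / 2 := by
    have hne : K' ≠ 0 := ne_of_gt hK'pos
    rw [hεdef]
    field_simp
  have hklb : 2 * K' * ((N₀:ℝ) + 2) / ε₀ < (k:ℝ) := by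
    have h1 : (2 * K' * ((N₀:ℝ) + 2) / ε₀) ≤ (⌈2 * K' * ((N₀:ℝ) + 2) / ε₀⌉₊ : ℝ) :=
      Nat.le_ceil _
    have h2 : ((⌈2 * K' * ((N₀:ℝ) + 2) / ε₀⌉₊ : ℝ)) < (k:ℝ) := by
      rw [hkdef]; push_cast; linarith
    linarith
  have hexp : K' * ((N₀:ℝ) + (k:ℝ) * ε + 2) = K' * ((N₀:ℝ) + 2) + (k:ℝ) * (K' * ε) := by
    ring
  rw [hexp, hK'ε] at hfinal
  rw [div_lt_iff₀ hε₀] at hklb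
  linarith
end
end
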